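/- arXiv:0904.2104 — 4 statements merged into one kernel-verified Lean document; each statement's English description precedes it below -/
import Mathlib

section
/- Let (H, P, (S_1,…,S_d)) be a minimal Popescu dilation of a Popescu system (v_1,…,v_d) on K. Then the operators Λ^n(P), n ≥ 0, where Λ(X) = Σ_{k=1}^d S_k X S_k*, form an increasing sequence of orthogonal projections which converges to the identity of H in the strong operator topology. -/
open ContinuousLinearMap Filter
open scoped ComplexInnerProductSpace ComplexOrder

noncomputable section

/-- The operator `S_I = S_{i₁} ⋯ S_{i_m}` associated to a finite multi-index
(the empty multi-index gives the identity). -/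
def cword {d : ℕ} {H : Type*} [NormedAddCommGroup H] [InnerProductSpace ℂ H]
    (S : Fin d → H →L[ℂ] H) (I : List (Fin d)) : H →L[ℂ] H :=
  (I.map S).prod

/-- A Cuntz family: `Sᵢ* Sⱼ = δᵢⱼ 1` and `∑ₖ Sₖ Sₖ* = 1`. -/
def IsCuntzFamily {d : ℕ} {H : Type*} [NormedAddCommGroup H] [InnerProductSpace ℂ H]
    [CompleteSpace H] (S : Fin d → H →L[ℂ] H) : Prop :=
  (∀ i j : Fin d, adjoint (S i) ∘L S j = if i = j then 1 else 0) ∧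
    ∑ k : Fin d, S k ∘L adjoint (S k) = 1

/-- A Popescu system: `∑ₖ vₖ vₖ* = 1`. -/
def IsPopescuSystem {d : ℕ} {K : Type*} [NormedAddCommGroup K] [InnerProductSpace ℂ K]
    [CompleteSpace K] (v : Fin d → K →L[ℂ] K) : Prop :=
  ∑ k : Fin d, v k ∘L adjoint (v k) = 1

/-- A minimal Popescu dilation of a Popescu system `v` on `K`: `H` contains `K` as a closed
subspace via the isometric embedding `ι` (so `P = ι ∘ ι*` is the orthogonal projection of `H`
onto the copy of `K`), `S` is a Cuntz family leaving the copy of `K` invariant under every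
`Sₖ*` (`P Sₖ* P = Sₖ* P`), the compression of `Sₖ` to `K` is `vₖ`, and the vectors
`S_I ξ`, `ξ ∈ K`, are total in `H`. -/
def IsMinimalDilation {d : ℕ} {K H : Type*}
    [NormedAddCommGroup K] [InnerProductSpace ℂ K] [CompleteSpace K]
    [NormedAddCommGroup H] [InnerProductSpace ℂ H] [CompleteSpace H]
    (v : Fin d → K →L[ℂ] K) (ι : K →L[ℂ] H) (S : Fin d → H →L[ℂ] H) : Prop :=
  IsCuntzFamily S ∧
  adjoint ι ∘L ι = 1 ∧
  (∀ k, (ι ∘L adjoint ι) ∘L adjoint (S k) ∘L (ι ∘L adjoint ι) = adjoint (S k) ∘L (ι ∘L adjoint ι)) ∧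
  (∀ k, adjoint ι ∘L S k ∘L ι = v k) ∧
  Dense ((Submodule.span ℂ {x : H | ∃ (I : List (Fin d)) (ξ : K), x = cword S I (ι ξ)} :
    Submodule ℂ H) : Set H)


/-- The canonical endomorphism `Λ(X) = ∑ₖ Sₖ X Sₖ*`. -/
def cLam {d : ℕ} {H : Type*} [NormedAddCommGroup H] [InnerProductSpace ℂ H] [CompleteSpace H]
    (S : Fin d → H →L[ℂ] H) (X : H →L[ℂ] H) : H →L[ℂ] H :=
  ∑ k : Fin d, S k ∘L X ∘L adjoint (S k)

section Aux

variable {d : ℕ} {H : Type*} [NormedAddCommGroup H] [InnerProductSpace ℂ H] [CompleteSpace H]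

lemma cLam_eq (S : Fin d → H →L[ℂ] H) (X : H →L[ℂ] H) :
    cLam S X = ∑ k : Fin d, S k * X * star (S k) := by
  simp only [cLam, ← mul_def, ← star_eq_adjoint, mul_assoc]

lemma cLam_star (S : Fin d → H →L[ℂ] H) (X : H →L[ℂ] H) :
    star (cLam S X) = cLam S (star X) := by
  rw [cLam_eq, cLam_eq, star_sum]
  exact Finset.sum_congr rfl fun k _ => by simp [star_mul, mul_assoc]

lemma cLam_sub (S : Fin d → H →L[ℂ] H) (X Y : H →L[ℂ] H) :
    cLam S (X - Y) = cLam S X - cLam S Y := by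
  rw [cLam_eq, cLam_eq, cLam_eq, ← Finset.sum_sub_distrib]
  exact Finset.sum_congr rfl fun k _ => by rw [mul_sub, sub_mul]

variable {S : Fin d → H →L[ℂ] H}
  (hrel : ∀ i j : Fin d, star (S i) * S j = if i = j then 1 else 0)

include hrel in
lemma cLam_mul (X Y : H →L[ℂ] H) : cLam S X * cLam S Y = cLam S (X * Y) := by
  rw [cLam_eq, cLam_eq, cLam_eq, Finset.sum_mul]
  refine Finset.sum_congr rfl fun k _ => ?_
  rw [Finset.mul_sum]
  have key : ∀ l, (S k * X * star (S k)) * (S l * Y * star (S l))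
      = if l = k then S k * (X * Y) * star (S k) else 0 := by
    intro l
    have h := hrel k l
    have : (S k * X * star (S k)) * (S l * Y * star (S l))
        = S k * X * ((star (S k) * S l) * (Y * star (S l))) := by noncomm_ring
    rw [this, h]
    by_cases hkl : l = k
    · subst hkl; simp only [if_pos rfl]; noncomm_ring
    · rw [if_neg (fun h' => hkl h'.symm), if_neg hkl]; simp
  simp only [key]
  simp

include hrel in
lemma cLam_mul_S (X : H →L[ℂ] H) (i : Fin d) : cLam S X * S i = S i * X := by
  rw [cLam_eq, Finset.sum_mul]
  have key : ∀ k, (S k * X * star (S k)) * S i = if k = i then S k * X else 0 := by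
    intro k
    have h := hrel k i
    have : (S k * X * star (S k)) * S i = S k * X * (star (S k) * S i) := by noncomm_ring
    rw [this, h]
    split_ifs <;> simp
  simp only [key]
  simp

include hrel in
lemma cLam_iter_mul (m : ℕ) (X Y : H →L[ℂ] H) :
    (cLam S)^[m] X * (cLam S)^[m] Y = (cLam S)^[m] (X * Y) := by
  induction m generalizing X Y with
  | zero => rfl
  | succ m ih =>
      simp only [Function.iterate_succ_apply']
      rw [cLam_mul hrel, ih]

lemma cLam_iter_star (m : ℕ) (X : H →L[ℂ] H) :
    star ((cLam S)^[m] X) = (cLam S)^[m] (star X) := by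
  induction m generalizing X with
  | zero => rfl
  | succ m ih => simp only [Function.iterate_succ_apply', cLam_star, ih]

include hrel in
lemma cLam_iter_word (X : H →L[ℂ] H) (I : List (Fin d)) :
    (cLam S)^[I.length] X * cword S I = cword S I * X := by
  induction I generalizing X with
  | nil => simp [cword]
  | cons i I ih =>
      have hw : cword S (i :: I) = S i * cword S I := by
        simp [cword, mul_def]
      rw [hw, List.length_cons, ← mul_assoc]
      rw [show (cLam S)^[I.length + 1] X = cLam S ((cLam S)^[I.length] X) from
        Function.iterate_succ_apply' _ _ _]
      rw [cLam_mul_S hrel, mul_assoc, ih, mul_assoc]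

/-- A self-adjoint idempotent is positive. -/
lemma isPositive_of_sa_idem {T : H →L[ℂ] H} (h1 : IsSelfAdjoint T) (h2 : T * T = T) :
    T.IsPositive := by
  have key : ∀ x : H, (inner ℂ (T x) x : ℂ) = inner ℂ (T x) (T x) := by
    intro x
    conv_lhs => rw [← h2]
    rw [mul_def, comp_apply]
    rw [show T (T x) = adjoint (adjoint T) (T x) by rw [adjoint_adjoint]]
    rw [adjoint_inner_left, ← star_eq_adjoint, h1]
  refine ⟨isSelfAdjoint_iff_isSymmetric.mp h1, fun x => ?_⟩
  have : T.reApplyInnerSelf x = ‖T x‖ ^ 2 := by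
    show RCLike.re (inner ℂ (T x) x : ℂ) = _
    rw [key x, inner_self_eq_norm_sq]
  rw [this]; positivity

/-- A self-adjoint idempotent is a contraction. -/
lemma norm_le_of_sa_idem {T : H →L[ℂ] H} (h1 : IsSelfAdjoint T) (h2 : T * T = T)
    (x : H) : ‖T x‖ ≤ ‖x‖ := by
  have key : (inner ℂ (T x) (T x) : ℂ) = inner ℂ (T x) x := by
    have : T (T x) = adjoint (adjoint T) (T x) := by rw [adjoint_adjoint]
    calc (inner ℂ (T x) (T x) : ℂ) = inner ℂ (T (T x)) x := by
          rw [this, adjoint_inner_left, ← star_eq_adjoint, h1]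
      _ = inner ℂ (T x) x := by rw [← comp_apply, ← mul_def, h2]
  have h3 : ‖T x‖ ^ 2 = RCLike.re (inner ℂ (T x) x : ℂ) := by
    rw [← key, inner_self_eq_norm_sq]
  have h4 : RCLike.re (inner ℂ (T x) x : ℂ) ≤ ‖T x‖ * ‖x‖ := by
    calc RCLike.re (inner ℂ (T x) x : ℂ) ≤ ‖(inner ℂ (T x) x : ℂ)‖ := RCLike.re_le_norm _
      _ ≤ ‖T x‖ * ‖x‖ := norm_inner_le_norm _ _
  nlinarith [norm_nonneg (T x), norm_nonneg x]

end Aux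

/-- In a minimal Popescu dilation `(H, P, S)` of a Popescu system `v` on `K`
(with `P = ι ∘ ι*`), the operators `Λⁿ(P)` form an increasing sequence of orthogonal
projections converging strongly to the identity of `H`. -/
theorem lam_iterate_proj_increasing_tendsto_one {d : ℕ} (hd : 2 ≤ d)
    {K H : Type*} [NormedAddCommGroup K] [InnerProductSpace ℂ K] [CompleteSpace K]
    [NormedAddCommGroup H] [InnerProductSpace ℂ H] [CompleteSpace H]
    (v : Fin d → K →L[ℂ] K) (hv : IsPopescuSystem v)
    (ι : K →L[ℂ] H) (S : Fin d → H →L[ℂ] H) (hdil : IsMinimalDilation v ι S) :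
    (∀ n : ℕ, IsSelfAdjoint ((cLam S)^[n] (ι ∘L adjoint ι)) ∧
        IsIdempotentElem ((cLam S)^[n] (ι ∘L adjoint ι))) ∧
    (∀ n : ℕ, ((cLam S)^[n + 1] (ι ∘L adjoint ι) - (cLam S)^[n] (ι ∘L adjoint ι)).IsPositive) ∧
    (∀ x : H, Filter.Tendsto (fun n : ℕ => ((cLam S)^[n] (ι ∘L adjoint ι)) x)
        Filter.atTop (nhds x)) := by
  obtain ⟨⟨hC1, hC2⟩, hiso, hinv, hcomp, hdense⟩ := hdil
  set P : H →L[ℂ] H := ι ∘L adjoint ι with hPdef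
  have hrel : ∀ i j : Fin d, star (S i) * S j = if i = j then 1 else 0 := by
    intro i j; simpa [mul_def, star_eq_adjoint] using hC1 i j
  have hsum : ∑ k : Fin d, S k * star (S k) = 1 := by
    simpa [mul_def, star_eq_adjoint] using hC2
  -- basic facts about P
  have hPstar : star P = P := by
    rw [hPdef, star_eq_adjoint, adjoint_comp, adjoint_adjoint]
  have hPP : P * P = P := by
    rw [hPdef, mul_def, comp_assoc, ← comp_assoc (adjoint ι) ι (adjoint ι), hiso, one_def, id_comp]
  -- Λ(P) P = P
  have h3 : ∀ k, P * (star (S k) * P) = star (S k) * P := by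
    intro k; simpa [mul_def, star_eq_adjoint] using hinv k
  have hLPP : cLam S P * P = P := by
    rw [cLam_eq, Finset.sum_mul]
    have key : ∀ k, (S k * P * star (S k)) * P = (S k * star (S k)) * P := by
      intro k
      calc (S k * P * star (S k)) * P = S k * (P * (star (S k) * P)) := by noncomm_ring
        _ = S k * (star (S k) * P) := by rw [h3]
        _ = (S k * star (S k)) * P := by rw [mul_assoc]
    simp only [key]
    rw [← Finset.sum_mul, hsum, one_mul]
  -- Q n := Λⁿ(P)
  have hQstar : ∀ n, star ((cLam S)^[n] P) = (cLam S)^[n] P := by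
    intro n; rw [cLam_iter_star, hPstar]
  have hQidem : ∀ n, (cLam S)^[n] P * (cLam S)^[n] P = (cLam S)^[n] P := by
    intro n; rw [cLam_iter_mul hrel, hPP]
  -- Λⁿ(P) P = P
  have hQP : ∀ n, (cLam S)^[n] P * P = P := by
    intro n
    induction n with
    | zero => exact hPP
    | succ n ih =>
        calc (cLam S)^[n + 1] P * P = (cLam S)^[n + 1] P * (cLam S P * P) := by rw [hLPP]
          _ = (cLam S ((cLam S)^[n] P) * cLam S P) * P := by
              rw [← mul_assoc, Function.iterate_succ_apply']
          _ = cLam S ((cLam S)^[n] P * P) * P := by rw [cLam_mul hrel]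
          _ = cLam S P * P := by rw [ih]
          _ = P := hLPP
  -- Q n * Q m = Q m for m ≤ n
  have hQmono : ∀ m j : ℕ, (cLam S)^[m + j] P * (cLam S)^[m] P = (cLam S)^[m] P := by
    intro m j
    rw [Function.iterate_add_apply, cLam_iter_mul hrel, hQP]
  refine ⟨fun n => ⟨hQstar n, hQidem n⟩, fun n => ?_, ?_⟩
  · -- positivity of differences
    have hdstar : star ((cLam S)^[n + 1] P - (cLam S)^[n] P)
        = (cLam S)^[n + 1] P - (cLam S)^[n] P := by
      rw [star_sub, hQstar, hQstar]
    have h1 : (cLam S)^[n + 1] P * (cLam S)^[n] P = (cLam S)^[n] P := hQmono n 1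
    have h2 : (cLam S)^[n] P * (cLam S)^[n + 1] P = (cLam S)^[n] P := by
      have := congrArg star h1
      rwa [star_mul, hQstar, hQstar] at this
    have hdidem : ((cLam S)^[n + 1] P - (cLam S)^[n] P) * ((cLam S)^[n + 1] P - (cLam S)^[n] P)
        = (cLam S)^[n + 1] P - (cLam S)^[n] P := by
      rw [sub_mul, mul_sub, mul_sub, hQidem, hQidem, h1, h2]
      abel
    exact isPositive_of_sa_idem hdstar hdidem
  · -- strong convergence
    -- generators are eventually fixed
    have hPfix : ∀ ξ : K, P (ι ξ) = ι ξ := by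
      intro ξ
      have : P (ι ξ) = ι ((adjoint ι ∘L ι) ξ) := by rw [hPdef]; rfl
      rw [this, hiso]; rfl
    have hgen : ∀ (I : List (Fin d)) (ξ : K),
        (cLam S)^[I.length] P (cword S I (ι ξ)) = cword S I (ι ξ) := by
      intro I ξ
      calc (cLam S)^[I.length] P (cword S I (ι ξ))
          = ((cLam S)^[I.length] P * cword S I) (ι ξ) := rfl
        _ = (cword S I * P) (ι ξ) := by rw [cLam_iter_word hrel]
        _ = cword S I (P (ι ξ)) := rfl
        _ = cword S I (ι ξ) := by rw [hPfix]
    have hfix_of_ge : ∀ (m : ℕ) (x : H), (cLam S)^[m] P x = x →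
        ∀ n, m ≤ n → (cLam S)^[n] P x = x := by
      intro m x hx n hmn
      obtain ⟨j, rfl⟩ := Nat.exists_eq_add_of_le hmn
      calc (cLam S)^[m + j] P x = (cLam S)^[m + j] P ((cLam S)^[m] P x) := by rw [hx]
        _ = ((cLam S)^[m + j] P * (cLam S)^[m] P) x := rfl
        _ = (cLam S)^[m] P x := by rw [hQmono]
        _ = x := hx
    -- eventual fixing on the span
    have hspan : ∀ y ∈ (Submodule.span ℂ
        {x : H | ∃ (I : List (Fin d)) (ξ : K), x = cword S I (ι ξ)} : Submodule ℂ H),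
        ∃ N : ℕ, ∀ n, N ≤ n → (cLam S)^[n] P y = y := by
      intro y hy
      induction hy using Submodule.span_induction with
      | mem x hx =>
          obtain ⟨I, ξ, rfl⟩ := hx
          exact ⟨I.length, fun n hn => hfix_of_ge I.length _ (hgen I ξ) n hn⟩
      | zero => exact ⟨0, fun n _ => map_zero _⟩
      | add x y hx hy ihx ihy =>
          obtain ⟨N₁, h₁⟩ := ihx
          obtain ⟨N₂, h₂⟩ := ihy
          exact ⟨max N₁ N₂, fun n hn => by
            rw [map_add, h₁ n (le_trans (le_max_left _ _) hn),
              h₂ n (le_trans (le_max_right _ _) hn)]⟩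
      | smul a x hx ihx =>
          obtain ⟨N, hN⟩ := ihx
          exact ⟨N, fun n hn => by rw [map_smul, hN n hn]⟩
    -- contraction bound
    have hbound : ∀ (n : ℕ) (z : H), ‖(cLam S)^[n] P z‖ ≤ ‖z‖ := fun n =>
      norm_le_of_sa_idem (hQstar n) (hQidem n)
    intro x
    rw [Metric.tendsto_atTop]
    intro ε hε
    obtain ⟨y, hy, hxy⟩ := hdense.exists_dist_lt x (show (0:ℝ) < ε / 3 by linarith)
    obtain ⟨N, hN⟩ := hspan y hy
    refine ⟨N, fun n hn => ?_⟩
    have h1 : ‖(cLam S)^[n] P x - x‖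
        ≤ ‖(cLam S)^[n] P (x - y)‖ + ‖y - x‖ := by
      have : (cLam S)^[n] P x - x = (cLam S)^[n] P (x - y) + (y - x) := by
        rw [map_sub, hN n hn]; abel
      rw [this]
      exact norm_add_le _ _
    have h2 : ‖(cLam S)^[n] P (x - y)‖ ≤ ‖x - y‖ := hbound n _
    have h3 : ‖x - y‖ < ε / 3 := by rwa [← dist_eq_norm]
    have h4 : ‖y - x‖ < ε / 3 := by rwa [norm_sub_rev, ← dist_eq_norm]
    rw [dist_eq_norm]
    linarith
end
end

section
/- Let (H, P, (S_1,…,S_d)) be a minimal Popescu dilation of a Popescu system (v_1,…,v_d) on K. For every D ∈ B(K) with Σ_{k=1}^d v_k D v_k* = D (identify D with P D P ∈ B(H)), the operators Λ^n(D) converge in the weak operator topology to an operator X' which commutes with every S_k and S_k* and satisfies P X' P = D. Moreover the map X' ↦ P X' P is an isometric order isomorphism from the set of self-adjoint elements of the commutant {S_k, S_k* : 1 ≤ k ≤ d}' onto the set of self-adjoint elements of B_τ(K) := {x ∈ B(K) : Σ_{k=1}^d v_k x v_k* = x}. -/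
open ContinuousLinearMap Filter
open scoped ComplexInnerProductSpace ComplexOrder

noncomputable section

namespace CLift

variable {d : ℕ} {K H : Type*}
    [NormedAddCommGroup K] [InnerProductSpace ℂ K] [CompleteSpace K]
    [NormedAddCommGroup H] [InnerProductSpace ℂ H] [CompleteSpace H]
    {v : Fin d → K →L[ℂ] K} {ι : K →L[ℂ] H} {S : Fin d → H →L[ℂ] H}

lemma iaia (hdil : IsMinimalDilation v ι S) (x : K) : adjoint ι (ι x) = x := by
  simpa using DFunLike.congr_fun hdil.2.1 x

lemma Sadj_iota (hdil : IsMinimalDilation v ι S) (k : Fin d) :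
    adjoint (S k) ∘L ι = ι ∘L adjoint (v k) := by
  obtain ⟨-, hι, hP, hvk, -⟩ := hdil
  have h2 : adjoint ι ∘L (adjoint (S k) ∘L ι) = adjoint (v k) := by
    rw [← hvk k]; simp [adjoint_comp, adjoint_adjoint, comp_assoc]
  ext x
  have h1 := DFunLike.congr_fun (hP k) (ι x)
  have hιι : ∀ y : K, adjoint ι (ι y) = y := fun y => by
    simpa using DFunLike.congr_fun hι y
  simp only [comp_apply, hιι] at h1
  have h2sub := DFunLike.congr_fun h2 x
  simp only [comp_apply] at h2sub
  simp only [comp_apply, ← h2sub, h1]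

lemma Sadj_iota_apply (hdil : IsMinimalDilation v ι S) (k : Fin d) (x : K) :
    adjoint (S k) (ι x) = ι (adjoint (v k) x) := by
  simpa using DFunLike.congr_fun (Sadj_iota hdil k) x

lemma iotaAdj_S (hdil : IsMinimalDilation v ι S) (k : Fin d) :
    adjoint ι ∘L S k = v k ∘L adjoint ι := by
  have := congrArg adjoint (Sadj_iota hdil k)
  simpa [adjoint_comp, adjoint_adjoint] using this

lemma iotaAdj_S_apply (hdil : IsMinimalDilation v ι S) (k : Fin d) (x : H) :
    adjoint ι (S k x) = v k (adjoint ι x) := by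
  simpa using DFunLike.congr_fun (iotaAdj_S hdil k) x

lemma norm_iota_apply (hdil : IsMinimalDilation v ι S) (x : K) : ‖ι x‖ = ‖x‖ := by
  have h : (⟪ι x, ι x⟫ : ℂ) = ⟪x, x⟫ := by
    rw [← ContinuousLinearMap.adjoint_inner_right, iaia hdil]
  have h2 : RCLike.re (⟪ι x, ι x⟫ : ℂ) = RCLike.re (⟪x, x⟫ : ℂ) := by rw [h]
  rw [inner_self_eq_norm_sq (𝕜 := ℂ), inner_self_eq_norm_sq (𝕜 := ℂ)] at h2
  nlinarith [norm_nonneg (ι x), norm_nonneg x]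

lemma norm_iota_le (hdil : IsMinimalDilation v ι S) : ‖ι‖ ≤ 1 := by
  refine ContinuousLinearMap.opNorm_le_bound _ zero_le_one fun x => ?_
  rw [norm_iota_apply hdil, one_mul]

lemma norm_iotaAdj_le (hdil : IsMinimalDilation v ι S) : ‖adjoint ι‖ ≤ 1 := by
  rw [LinearIsometryEquiv.norm_map adjoint ι]
  exact norm_iota_le hdil

end CLift
namespace CLift

variable {d : ℕ} {K H : Type*}
    [NormedAddCommGroup K] [InnerProductSpace ℂ K] [CompleteSpace K]
    [NormedAddCommGroup H] [InnerProductSpace ℂ H] [CompleteSpace H]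
    {v : Fin d → K →L[ℂ] K} {ι : K →L[ℂ] H} {S : Fin d → H →L[ℂ] H}

lemma cLam_eq_mul (Y : H →L[ℂ] H) : cLam S Y = ∑ k : Fin d, S k * Y * adjoint (S k) := by
  rfl

lemma hcol (hC : IsCuntzFamily S) (i k : Fin d) (f : H) :
    adjoint (S k) (S i f) = if k = i then f else 0 := by
  have := DFunLike.congr_fun (hC.1 k i) f
  simp only [comp_apply] at this
  rw [this]; split <;> simp

lemma sum_SSadj (hC : IsCuntzFamily S) : (∑ k : Fin d, S k * adjoint (S k)) = 1 := by
  rw [← hC.2]; rfl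

lemma lam_mul_S (hC : IsCuntzFamily S) (Y : H →L[ℂ] H) (k : Fin d) :
    cLam S Y * S k = S k * Y := by
  rw [cLam_eq_mul, Finset.sum_mul]
  have : ∀ j : Fin d, S j * Y * adjoint (S j) * S k = if j = k then S j * Y else 0 := by
    intro j
    rw [mul_assoc, mul_assoc, show adjoint (S j) * S k = adjoint (S j) ∘L S k from rfl, hC.1 j k]
    split <;> simp [mul_assoc]
  simp only [this, Finset.sum_ite_eq' Finset.univ, Finset.mem_univ, if_true]

lemma Sadj_mul_lam (hC : IsCuntzFamily S) (Y : H →L[ℂ] H) (k : Fin d) :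
    adjoint (S k) * cLam S Y = Y * adjoint (S k) := by
  rw [cLam_eq_mul, Finset.mul_sum]
  have : ∀ j : Fin d, adjoint (S k) * (S j * Y * adjoint (S j))
      = if k = j then Y * adjoint (S j) else 0 := by
    intro j
    rw [show S j * Y * adjoint (S j) = S j * (Y * adjoint (S j)) from by rw [mul_assoc],
      ← mul_assoc, show adjoint (S k) * S j = adjoint (S k) ∘L S j from rfl, hC.1 k j]
    split <;> simp
  simp only [this, Finset.sum_ite_eq Finset.univ, Finset.mem_univ, if_true]

lemma lam_adjoint (Y : H →L[ℂ] H) : adjoint (cLam S Y) = cLam S (adjoint Y) := by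
  rw [← star_eq_adjoint, cLam_eq_mul, star_sum, cLam_eq_mul]
  congr 1; funext k
  rw [star_mul, star_mul, ← star_eq_adjoint, ← star_eq_adjoint, star_star, mul_assoc]

lemma lam_fix (hC : IsCuntzFamily S) {X : H →L[ℂ] H} (hX : ∀ k, Commute X (S k)) :
    cLam S X = X := by
  rw [cLam_eq_mul]
  have : ∀ k : Fin d, S k * X * adjoint (S k) = X * (S k * adjoint (S k)) := by
    intro k; rw [← (hX k).eq, mul_assoc]
  rw [Finset.sum_congr rfl fun k _ => this k, ← Finset.mul_sum, sum_SSadj hC, mul_one]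

lemma compr_lam (hdil : IsMinimalDilation v ι S) (Y : H →L[ℂ] H) :
    adjoint ι ∘L cLam S Y ∘L ι = ∑ k : Fin d, v k ∘L (adjoint ι ∘L Y ∘L ι) ∘L adjoint (v k) := by
  ext x
  simp only [comp_apply, cLam, ContinuousLinearMap.sum_apply, map_sum]
  congr 1; funext k
  rw [Sadj_iota_apply hdil, iotaAdj_S_apply hdil]

lemma compr_iterate (hdil : IsMinimalDilation v ι S) {D : K →L[ℂ] K}
    (hD : (∑ k : Fin d, v k ∘L D ∘L adjoint (v k)) = D) (n : ℕ) :
    adjoint ι ∘L ((cLam S)^[n] (ι ∘L D ∘L adjoint ι)) ∘L ι = D := by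
  induction n with
  | zero =>
    ext x; simp only [Function.iterate_zero, id_eq, comp_apply, iaia hdil]
  | succ n ih =>
    rw [Function.iterate_succ_apply', compr_lam hdil]
    rw [Finset.sum_congr rfl fun k _ => by rw [ih]]
    exact hD

lemma inner_iterate (hdil : IsMinimalDilation v ι S) {D : K →L[ℂ] K}
    (hD : (∑ k : Fin d, v k ∘L D ∘L adjoint (v k)) = D) (n : ℕ) (a b : K) :
    ⟪ι a, ((cLam S)^[n] (ι ∘L D ∘L adjoint ι)) (ι b)⟫ = ⟪a, D b⟫ := by
  have h := DFunLike.congr_fun (compr_iterate hdil hD n) b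
  simp only [comp_apply] at h
  rw [← h, ContinuousLinearMap.adjoint_inner_right]

end CLift
namespace CLift

variable {d : ℕ} {K H : Type*}
    [NormedAddCommGroup K] [InnerProductSpace ℂ K] [CompleteSpace K]
    [NormedAddCommGroup H] [InnerProductSpace ℂ H] [CompleteSpace H]
    {v : Fin d → K →L[ℂ] K} {ι : K →L[ℂ] H} {S : Fin d → H →L[ℂ] H}

lemma sum_normSq_Sadj (hC : IsCuntzFamily S) (f : H) :
    ∑ k : Fin d, ‖adjoint (S k) f‖ ^ 2 = ‖f‖ ^ 2 := by
  have h2 : ∑ k : Fin d, ‖adjoint (S k) f‖ ^ 2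
      = RCLike.re (⟪f, (∑ k : Fin d, S k ∘L adjoint (S k)) f⟫ : ℂ) := by
    rw [ContinuousLinearMap.sum_apply, inner_sum, map_sum]
    refine Finset.sum_congr rfl fun k _ => ?_
    rw [comp_apply, ← ContinuousLinearMap.adjoint_inner_left,
      inner_self_eq_norm_sq (𝕜 := ℂ)]
  rw [h2, hC.2, ContinuousLinearMap.one_apply, inner_self_eq_norm_sq (𝕜 := ℂ)]

lemma inner_lam (Y : H →L[ℂ] H) (f g : H) :
    (⟪f, cLam S Y g⟫ : ℂ) = ∑ k : Fin d, ⟪adjoint (S k) f, Y (adjoint (S k) g)⟫ := by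
  simp only [cLam, ContinuousLinearMap.sum_apply, inner_sum, comp_apply]
  congr 1; funext k
  rw [← ContinuousLinearMap.adjoint_inner_left]

lemma lam_norm_le (hC : IsCuntzFamily S) (Y : H →L[ℂ] H) : ‖cLam S Y‖ ≤ ‖Y‖ := by
  have key : ∀ f g : H, ‖(⟪f, cLam S Y g⟫ : ℂ)‖ ≤ ‖Y‖ * ‖f‖ * ‖g‖ := by
    intro f g
    rw [inner_lam]
    calc ‖∑ k : Fin d, (⟪adjoint (S k) f, Y (adjoint (S k) g)⟫ : ℂ)‖
        ≤ ∑ k : Fin d, ‖(⟪adjoint (S k) f, Y (adjoint (S k) g)⟫ : ℂ)‖ :=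
          norm_sum_le _ _
      _ ≤ ∑ k : Fin d, ‖Y‖ * (‖adjoint (S k) f‖ * ‖adjoint (S k) g‖) := by
          refine Finset.sum_le_sum fun k _ => ?_
          calc ‖(⟪adjoint (S k) f, Y (adjoint (S k) g)⟫ : ℂ)‖
              ≤ ‖adjoint (S k) f‖ * ‖Y (adjoint (S k) g)‖ := norm_inner_le_norm _ _
            _ ≤ ‖adjoint (S k) f‖ * (‖Y‖ * ‖adjoint (S k) g‖) := by
                exact mul_le_mul_of_nonneg_left (ContinuousLinearMap.le_opNorm _ _)
                  (norm_nonneg _)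
            _ = ‖Y‖ * (‖adjoint (S k) f‖ * ‖adjoint (S k) g‖) := by ring
      _ = ‖Y‖ * ∑ k : Fin d, ‖adjoint (S k) f‖ * ‖adjoint (S k) g‖ := by
          rw [Finset.mul_sum]
      _ ≤ ‖Y‖ * (‖f‖ * ‖g‖) := by
          refine mul_le_mul_of_nonneg_left ?_ (norm_nonneg Y)
          have h2 := Finset.sum_mul_sq_le_sq_mul_sq Finset.univ
            (fun k : Fin d => ‖adjoint (S k) f‖) (fun k : Fin d => ‖adjoint (S k) g‖)
          rw [sum_normSq_Sadj hC, sum_normSq_Sadj hC] at h2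
          have hsum : (0:ℝ) ≤ ∑ k : Fin d, ‖adjoint (S k) f‖ * ‖adjoint (S k) g‖ :=
            Finset.sum_nonneg fun k _ => mul_nonneg (norm_nonneg _) (norm_nonneg _)
          nlinarith [mul_nonneg (norm_nonneg f) (norm_nonneg g)]
      _ = ‖Y‖ * ‖f‖ * ‖g‖ := by ring
  refine ContinuousLinearMap.opNorm_le_bound _ (norm_nonneg Y) fun g => ?_
  have h := key (cLam S Y g) g
  have h2 : ‖cLam S Y g‖ ^ 2 = RCLike.re (⟪cLam S Y g, cLam S Y g⟫ : ℂ) :=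
    (inner_self_eq_norm_sq (𝕜 := ℂ) _).symm
  have h3 : RCLike.re (⟪cLam S Y g, cLam S Y g⟫ : ℂ) ≤ ‖(⟪cLam S Y g, cLam S Y g⟫ : ℂ)‖ :=
    RCLike.re_le_norm _
  by_cases h0 : ‖cLam S Y g‖ = 0
  · rw [h0]; positivity
  · have hpos : 0 < ‖cLam S Y g‖ := lt_of_le_of_ne (norm_nonneg _) (Ne.symm h0)
    nlinarith

lemma lam_pos (hC : IsCuntzFamily S) {Y : H →L[ℂ] H} (hY : Y.IsPositive) :
    (cLam S Y).IsPositive := by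
  have hadj : adjoint Y = Y := by rw [← star_eq_adjoint, hY.isSelfAdjoint.star_eq]
  refine isPositive_def'.mpr ⟨?_, ?_⟩
  · rw [IsSelfAdjoint, star_eq_adjoint, lam_adjoint, hadj]
  · intro x
    rw [ContinuousLinearMap.reApplyInnerSelf_apply, inner_re_symm, inner_lam, map_sum]
    refine Finset.sum_nonneg fun k _ => ?_
    rw [inner_re_symm]
    exact hY.2 (adjoint (S k) x)

end CLift
namespace CLift

variable {d : ℕ} {K H : Type*}
    [NormedAddCommGroup K] [InnerProductSpace ℂ K] [CompleteSpace K]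
    [NormedAddCommGroup H] [InnerProductSpace ℂ H] [CompleteSpace H]
    {v : Fin d → K →L[ℂ] K} {ι : K →L[ℂ] H} {S : Fin d → H →L[ℂ] H}

lemma cword_nil : cword S ([] : List (Fin d)) = 1 := rfl

lemma cword_cons (i : Fin d) (I : List (Fin d)) : cword S (i :: I) = S i * cword S I := by
  unfold cword; rw [List.map_cons, List.prod_cons]

lemma cword_cons_apply (i : Fin d) (I : List (Fin d)) (x : H) :
    cword S (i :: I) x = S i (cword S I x) := by
  rw [cword_cons]; rfl

lemma cword_nil_apply (x : H) : cword S ([] : List (Fin d)) x = x := rfl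

/-- `X` commutes with every word in the `Sₖ`. -/
lemma commute_cword {X : H →L[ℂ] H} (hX : ∀ k, Commute X (S k)) (I : List (Fin d)) :
    Commute X (cword S I) := by
  induction I with
  | nil => rw [cword_nil]; exact Commute.one_right X
  | cons i I ih => rw [cword_cons]; exact (hX i).mul_right ih

/-- adjoint of a word applied to the range of `ι`. -/
lemma adj_cword_iota (hdil : IsMinimalDilation v ι S) (I : List (Fin d)) (x : K) :
    adjoint (cword S I) (ι x) = ι (adjoint (cword v I) x) := by
  induction I generalizing x with
  | nil =>
    rw [cword_nil, cword_nil]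
    rw [← star_eq_adjoint, star_one, ← star_eq_adjoint, star_one, ContinuousLinearMap.one_apply, ContinuousLinearMap.one_apply]
  | cons i I ih =>
    rw [cword_cons, cword_cons,
      show (S i * cword S I : H →L[ℂ] H) = S i ∘L cword S I from rfl,
      show (v i * cword v I : K →L[ℂ] K) = v i ∘L cword v I from rfl,
      adjoint_comp, adjoint_comp, comp_apply, comp_apply,
      Sadj_iota_apply hdil, ih]

/-- Commutant elements vanishing on the corner are zero on word pairs. -/
lemma commutant_inner_eq (hdil : IsMinimalDilation v ι S) {W : H →L[ℂ] H}
    (hW : ∀ k, Commute W (S k) ∧ Commute W (adjoint (S k)))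
    (hc : adjoint ι ∘L W ∘L ι = 0) :
    ∀ (J I : List (Fin d)) (ξ η : K), (⟪cword S I (ι ξ), W (cword S J (ι η))⟫ : ℂ) = 0 := by
  have hWadj : ∀ k, Commute (adjoint W) (S k) := by
    intro k
    have h := (hW k).2.eq
    have := congrArg star h
    simp only [star_mul, star_eq_adjoint, adjoint_adjoint] at this
    exact this.symm
  have base : ∀ (I : List (Fin d)) (ξ η : K), (⟪cword S I (ι ξ), W (ι η)⟫ : ℂ) = 0 := by
    intro I ξ η
    rw [← ContinuousLinearMap.adjoint_inner_left]
    have h1 : adjoint W (cword S I (ι ξ)) = cword S I (adjoint W (ι ξ)) := by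
      have := (commute_cword hWadj I).eq
      have := DFunLike.congr_fun this (ι ξ)
      simpa [ContinuousLinearMap.mul_apply] using this
    rw [h1, ← ContinuousLinearMap.adjoint_inner_right (A := cword S I),
      adj_cword_iota hdil, ContinuousLinearMap.adjoint_inner_left,
      ← ContinuousLinearMap.adjoint_inner_right (A := ι)]
    have h2 : adjoint ι (W (ι (adjoint (cword v I) η))) = 0 := by
      have := DFunLike.congr_fun hc (adjoint (cword v I) η)
      simpa [comp_apply] using this
    rw [h2, inner_zero_right]
  intro J
  induction J with
  | nil => intro I ξ η; exact base I ξ η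
  | cons j J ih =>
    intro I ξ η
    have h1 : W (cword S (j :: J) (ι η)) = S j (W (cword S J (ι η))) := by
      rw [cword_cons_apply]
      have := DFunLike.congr_fun (hW j).1.eq (cword S J (ι η))
      simpa [ContinuousLinearMap.mul_apply] using this
    rw [h1, ← ContinuousLinearMap.adjoint_inner_left]
    cases I with
    | nil =>
      rw [cword_nil_apply, Sadj_iota_apply hdil]
      have := ih [] (adjoint (v j) ξ) η
      rwa [cword_nil_apply] at this
    | cons i I' =>
      rw [cword_cons_apply, hcol hdil.1 i j]
      split
      · exact ih I' ξ η
      · rw [inner_zero_left]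
end CLift
namespace CLift

variable {d : ℕ} {K H : Type*}
    [NormedAddCommGroup K] [InnerProductSpace ℂ K] [CompleteSpace K]
    [NormedAddCommGroup H] [InnerProductSpace ℂ H] [CompleteSpace H]
    {v : Fin d → K →L[ℂ] K} {ι : K →L[ℂ] H} {S : Fin d → H →L[ℂ] H}

/-- Any two commutant elements with equal compressions agree. -/
lemma commutant_ext (hdil : IsMinimalDilation v ι S) {X Y : H →L[ℂ] H}
    (hX : ∀ k, Commute X (S k) ∧ Commute X (adjoint (S k)))
    (hY : ∀ k, Commute Y (S k) ∧ Commute Y (adjoint (S k)))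
    (hc : adjoint ι ∘L X ∘L ι = adjoint ι ∘L Y ∘L ι) : X = Y := by
  set W : H →L[ℂ] H := X - Y with hWdef
  have hWcomm : ∀ k, Commute W (S k) ∧ Commute W (adjoint (S k)) :=
    fun k => ⟨(hX k).1.sub_left (hY k).1, (hX k).2.sub_left (hY k).2⟩
  have hc0 : adjoint ι ∘L W ∘L ι = 0 := by
    have : W ∘L ι = X ∘L ι - Y ∘L ι := by ext x; simp [hWdef]
    rw [this, ContinuousLinearMap.comp_sub, ← comp_assoc, ← comp_assoc] at *
    rw [show (adjoint ι ∘L X) ∘L ι = (adjoint ι ∘L Y) ∘L ι from by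
      rw [comp_assoc, comp_assoc]; exact hc]
    exact sub_self _
  have key := commutant_inner_eq hdil hWcomm hc0
  have hdense := hdil.2.2.2.2
  set V : Submodule ℂ H :=
    Submodule.span ℂ {x : H | ∃ (I : List (Fin d)) (ξ : K), x = cword S I (ι ξ)} with hV
  have hgen : ∀ g ∈ V, ∀ f ∈ V, (⟪f, W g⟫ : ℂ) = 0 := by
    intro g hg
    induction hg using Submodule.span_induction with
    | mem x hx =>
      obtain ⟨J, η, rfl⟩ := hx
      intro f hf
      induction hf using Submodule.span_induction with
      | mem y hy => obtain ⟨I, ξ, rfl⟩ := hy; exact key J I ξ η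
      | zero => rw [inner_zero_left]
      | add y z hy hz ihy ihz => rw [inner_add_left, ihy, ihz, add_zero]
      | smul a y hy ihy => rw [inner_smul_left, ihy, mul_zero]
    | zero => intro f hf; rw [map_zero, inner_zero_right]
    | add y z hy hz ihy ihz =>
      intro f hf; rw [map_add, inner_add_right, ihy f hf, ihz f hf, add_zero]
    | smul a y hy ihy => intro f hf; rw [map_smul, inner_smul_right, ihy f hf, mul_zero]
  have h1 : ∀ g ∈ V, W g = 0 := by
    intro g hg
    refine ext_inner_left ℂ fun f => ?_
    rw [inner_zero_right]
    have hfun : (fun f : H => (⟪f, W g⟫ : ℂ)) = fun _ : H => (0 : ℂ) :=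
      Continuous.ext_on hdense (continuous_id.inner continuous_const) continuous_const
        (fun f hf => hgen g hg f hf)
    exact congrFun hfun f
  have h2 : (W : H → H) = fun _ => 0 :=
    Continuous.ext_on hdense W.continuous continuous_const h1
  have h3 : W = 0 := ContinuousLinearMap.ext fun g => by
    rw [congrFun h2 g]; rfl
  have := sub_eq_zero.mp (by rw [← hWdef]; exact h3)
  exact this

/-- The iterates `Λⁿ(ι D ι†)`. -/
def itT (ι : K →L[ℂ] H) (S : Fin d → H →L[ℂ] H) (D : K →L[ℂ] K) (n : ℕ) : H →L[ℂ] H :=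
  (cLam S)^[n] (ι ∘L D ∘L adjoint ι)

lemma itT_succ (D : K →L[ℂ] K) (n : ℕ) : itT ι S D (n + 1) = cLam S (itT ι S D n) :=
  Function.iterate_succ_apply' _ _ _

lemma inner_lam_S (hC : IsCuntzFamily S) (Y : H →L[ℂ] H) (f g : H) (j : Fin d) :
    (⟪f, cLam S Y (S j g)⟫ : ℂ) = ⟪adjoint (S j) f, Y g⟫ := by
  have h : cLam S Y (S j g) = S j (Y g) := by
    simpa [ContinuousLinearMap.mul_apply] using DFunLike.congr_fun (lam_mul_S hC Y j) g
  rw [h, ← ContinuousLinearMap.adjoint_inner_left]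

lemma inner_S_lam_iota (hdil : IsMinimalDilation v ι S) (Y : H →L[ℂ] H) (i : Fin d)
    (f : H) (η : K) :
    (⟪S i f, cLam S Y (ι η)⟫ : ℂ) = ⟪f, Y (ι (adjoint (v i) η))⟫ := by
  rw [inner_lam]
  have hk : ∀ k : Fin d, (⟪adjoint (S k) (S i f), Y (adjoint (S k) (ι η))⟫ : ℂ)
      = if k = i then ⟪f, Y (ι (adjoint (v k) η))⟫ else 0 := by
    intro k
    rw [Sadj_iota_apply hdil, hcol hdil.1 i k]
    split
    · rfl
    · rw [inner_zero_left]
  rw [Finset.sum_congr rfl fun k _ => hk k, Finset.sum_ite_eq' Finset.univ,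
    if_pos (Finset.mem_univ i)]

end CLift
namespace CLift

variable {d : ℕ} {K H : Type*}
    [NormedAddCommGroup K] [InnerProductSpace ℂ K] [CompleteSpace K]
    [NormedAddCommGroup H] [InnerProductSpace ℂ H] [CompleteSpace H]
    {v : Fin d → K →L[ℂ] K} {ι : K →L[ℂ] H} {S : Fin d → H →L[ℂ] H}

lemma const_nil (hdil : IsMinimalDilation v ι S) {D : K →L[ℂ] K}
    (hD : (∑ k : Fin d, v k ∘L D ∘L adjoint (v k)) = D) :
    ∀ (I : List (Fin d)) (ξ η : K) (n : ℕ), I.length ≤ n →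
      (⟪cword S I (ι ξ), itT ι S D (n + 1) (ι η)⟫ : ℂ)
        = ⟪cword S I (ι ξ), itT ι S D n (ι η)⟫ := by
  intro I
  induction I with
  | nil =>
    intro ξ η n _
    exact (inner_iterate hdil hD (n + 1) ξ η).trans (inner_iterate hdil hD n ξ η).symm
  | cons i I ih =>
    intro ξ η n hn
    rcases n with _ | m
    · simp at hn
    have hL : ∀ p : ℕ, (⟪cword S (i :: I) (ι ξ), itT ι S D (p + 1) (ι η)⟫ : ℂ)
        = ⟪cword S I (ι ξ), itT ι S D p (ι (adjoint (v i) η))⟫ := by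
      intro p
      rw [cword_cons_apply, itT_succ]
      exact inner_S_lam_iota hdil _ i _ η
    rw [hL (m + 1), hL m]
    refine ih ξ (adjoint (v i) η) m ?_
    simp only [List.length_cons] at hn; omega

lemma const_step (hdil : IsMinimalDilation v ι S) {D : K →L[ℂ] K}
    (hD : (∑ k : Fin d, v k ∘L D ∘L adjoint (v k)) = D) :
    ∀ (J I : List (Fin d)) (ξ η : K) (n : ℕ), I.length + J.length ≤ n →
      (⟪cword S I (ι ξ), itT ι S D (n + 1) (cword S J (ι η))⟫ : ℂ)
        = ⟪cword S I (ι ξ), itT ι S D n (cword S J (ι η))⟫ := by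
  intro J
  induction J with
  | nil =>
    intro I ξ η n hn
    exact const_nil hdil hD I ξ η n (by simpa using hn)
  | cons j J ih =>
    intro I ξ η n hn
    rcases n with _ | m
    · exfalso; simp only [List.length_cons] at hn; omega
    have hL : ∀ p : ℕ, (⟪cword S I (ι ξ), itT ι S D (p + 1) (cword S (j :: J) (ι η))⟫ : ℂ)
        = ⟪adjoint (S j) (cword S I (ι ξ)), itT ι S D p (cword S J (ι η))⟫ := by
      intro p
      rw [cword_cons_apply (S := S) j J, itT_succ]
      exact inner_lam_S hdil.1 _ _ _ j
    rw [hL (m + 1), hL m]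
    cases I with
    | nil =>
      rw [cword_nil_apply, Sadj_iota_apply hdil]
      exact ih [] (adjoint (v j) ξ) η m
        (by simp only [List.length_cons, List.length_nil] at hn ⊢; omega)
    | cons i I' =>
      rw [cword_cons_apply, hcol hdil.1 i j]
      split
      · exact ih I' ξ η m (by simp only [List.length_cons] at hn ⊢; omega)
      · rw [inner_zero_left, inner_zero_left]

lemma const_ge (hdil : IsMinimalDilation v ι S) {D : K →L[ℂ] K}
    (hD : (∑ k : Fin d, v k ∘L D ∘L adjoint (v k)) = D)
    (I J : List (Fin d)) (ξ η : K) :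
    ∀ m n : ℕ, I.length + J.length ≤ m → I.length + J.length ≤ n →
      (⟪cword S I (ι ξ), itT ι S D m (cword S J (ι η))⟫ : ℂ)
        = ⟪cword S I (ι ξ), itT ι S D n (cword S J (ι η))⟫ := by
  set N := I.length + J.length with hN
  have aux : ∀ p : ℕ, (⟪cword S I (ι ξ), itT ι S D (N + p) (cword S J (ι η))⟫ : ℂ)
      = ⟪cword S I (ι ξ), itT ι S D N (cword S J (ι η))⟫ := by
    intro p
    induction p with
    | zero => rfl
    | succ p ihp =>
      rw [show N + (p + 1) = (N + p) + 1 from rfl, const_step hdil hD J I ξ η (N + p) (by omega)]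
      exact ihp
  intro m n hm hn
  have h1 := aux (m - N)
  have h2 := aux (n - N)
  rw [show N + (m - N) = m from by omega] at h1
  rw [show N + (n - N) = n from by omega] at h2
  rw [h1, h2]

end CLift
namespace CLift

variable {d : ℕ} {K H : Type*}
    [NormedAddCommGroup K] [InnerProductSpace ℂ K] [CompleteSpace K]
    [NormedAddCommGroup H] [InnerProductSpace ℂ H] [CompleteSpace H]
    {v : Fin d → K →L[ℂ] K} {ι : K →L[ℂ] H} {S : Fin d → H →L[ℂ] H}

lemma itT_norm_le (hdil : IsMinimalDilation v ι S) (D : K →L[ℂ] K) (n : ℕ) :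
    ‖itT ι S D n‖ ≤ ‖D‖ := by
  induction n with
  | zero =>
    have h1 : ‖ι ∘L D ∘L adjoint ι‖ ≤ ‖ι‖ * (‖D‖ * ‖adjoint ι‖) :=
      le_trans (ContinuousLinearMap.opNorm_comp_le _ _)
        (mul_le_mul_of_nonneg_left (ContinuousLinearMap.opNorm_comp_le _ _) (norm_nonneg _))
    have h2 := norm_iota_le hdil
    have h3 := norm_iotaAdj_le hdil
    refine le_trans h1 ?_
    have h4 : ‖D‖ * ‖adjoint ι‖ ≤ ‖D‖ := mul_le_of_le_one_right (norm_nonneg D) h3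
    have h5 : ‖ι‖ * (‖D‖ * ‖adjoint ι‖) ≤ 1 * (‖D‖ * ‖adjoint ι‖) :=
      mul_le_mul_of_nonneg_right h2 (by positivity)
    nlinarith
  | succ n ih =>
    rw [itT_succ]
    exact le_trans (lam_norm_le hdil.1 _) ih

lemma inner_itT_bound (hdil : IsMinimalDilation v ι S) (D : K →L[ℂ] K) (n : ℕ) (x y : H) :
    ‖(⟪x, itT ι S D n y⟫ : ℂ)‖ ≤ ‖D‖ * ‖x‖ * ‖y‖ := by
  calc ‖(⟪x, itT ι S D n y⟫ : ℂ)‖ ≤ ‖x‖ * ‖itT ι S D n y‖ := norm_inner_le_norm _ _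
    _ ≤ ‖x‖ * (‖itT ι S D n‖ * ‖y‖) :=
      mul_le_mul_of_nonneg_left (ContinuousLinearMap.le_opNorm _ _) (norm_nonneg _)
    _ ≤ ‖x‖ * (‖D‖ * ‖y‖) := by
      refine mul_le_mul_of_nonneg_left ?_ (norm_nonneg _)
      exact mul_le_mul_of_nonneg_right (itT_norm_le hdil D n) (norm_nonneg _)
    _ = ‖D‖ * ‖x‖ * ‖y‖ := by ring

lemma ev_const (hdil : IsMinimalDilation v ι S) {D : K →L[ℂ] K}
    (hD : (∑ k : Fin d, v k ∘L D ∘L adjoint (v k)) = D) :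
    ∀ f ∈ (Submodule.span ℂ {x : H | ∃ (I : List (Fin d)) (ξ : K), x = cword S I (ι ξ)} :
      Submodule ℂ H),
    ∀ g ∈ (Submodule.span ℂ {x : H | ∃ (I : List (Fin d)) (ξ : K), x = cword S I (ι ξ)} :
      Submodule ℂ H),
    ∃ N : ℕ, ∀ m ≥ N, ∀ n ≥ N, (⟪f, itT ι S D m g⟫ : ℂ) = ⟪f, itT ι S D n g⟫ := by
  intro f hf
  induction hf using Submodule.span_induction with
  | mem x hx =>
    obtain ⟨I, ξ, rfl⟩ := hx
    intro g hg
    induction hg using Submodule.span_induction with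
    | mem y hy =>
      obtain ⟨J, η, rfl⟩ := hy
      exact ⟨I.length + J.length, fun m hm n hn => const_ge hdil hD I J ξ η m n hm hn⟩
    | zero => exact ⟨0, fun m _ n _ => by rw [map_zero, map_zero]⟩
    | add y z hy hz ihy ihz =>
      obtain ⟨N₁, h₁⟩ := ihy
      obtain ⟨N₂, h₂⟩ := ihz
      refine ⟨max N₁ N₂, fun m hm n hn => ?_⟩
      rw [map_add, map_add, inner_add_right, inner_add_right,
        h₁ m (le_trans (le_max_left _ _) hm) n (le_trans (le_max_left _ _) hn),
        h₂ m (le_trans (le_max_right _ _) hm) n (le_trans (le_max_right _ _) hn)]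
    | smul a y hy ihy =>
      obtain ⟨N, hN⟩ := ihy
      exact ⟨N, fun m hm n hn => by
        rw [map_smul, map_smul, inner_smul_right, inner_smul_right, hN m hm n hn]⟩
  | zero => exact fun g _ => ⟨0, fun m _ n _ => by rw [inner_zero_left, inner_zero_left]⟩
  | add y z hy hz ihy ihz =>
    intro g hg
    obtain ⟨N₁, h₁⟩ := ihy g hg
    obtain ⟨N₂, h₂⟩ := ihz g hg
    refine ⟨max N₁ N₂, fun m hm n hn => ?_⟩
    rw [inner_add_left, inner_add_left,
      h₁ m (le_trans (le_max_left _ _) hm) n (le_trans (le_max_left _ _) hn),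
      h₂ m (le_trans (le_max_right _ _) hm) n (le_trans (le_max_right _ _) hn)]
  | smul a y hy ihy =>
    intro g hg
    obtain ⟨N, hN⟩ := ihy g hg
    exact ⟨N, fun m hm n hn => by
      rw [inner_smul_left, inner_smul_left, hN m hm n hn]⟩

set_option maxHeartbeats 1000000 in
lemma wot_cauchy (hdil : IsMinimalDilation v ι S) {D : K →L[ℂ] K}
    (hD : (∑ k : Fin d, v k ∘L D ∘L adjoint (v k)) = D) (f g : H) :
    ∃ c : ℂ, Tendsto (fun n => (⟪f, itT ι S D n g⟫ : ℂ)) atTop (nhds c) := by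
  apply cauchySeq_tendsto_of_complete
  rw [Metric.cauchySeq_iff]
  intro ε hε
  have hC : (0:ℝ) < ‖D‖ + 1 := by positivity
  set C := ‖D‖ + 1 with hCdef
  set R := ‖f‖ + ‖g‖ + 2 with hRdef
  have hR : (0:ℝ) < R := by positivity
  set δ := min 1 (ε / (8 * C * R)) with hδdef
  have hδpos : 0 < δ := lt_min one_pos (by positivity)
  have hδ1 : δ ≤ 1 := min_le_left _ _
  have hδ2 : δ ≤ ε / (8 * C * R) := min_le_right _ _
  clear_value δ
  have hdense := hdil.2.2.2.2
  obtain ⟨f', hf'V, hf'⟩ := hdense.exists_dist_lt f hδpos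
  obtain ⟨g', hg'V, hg'⟩ := hdense.exists_dist_lt g hδpos
  rw [dist_eq_norm] at hf' hg'
  obtain ⟨N, hN⟩ := ev_const hdil hD f' hf'V g' hg'V
  refine ⟨N, fun m hm n hn => ?_⟩
  have hdiff : ∀ p : ℕ, ‖(⟪f, itT ι S D p g⟫ : ℂ) - ⟪f', itT ι S D p g'⟫‖ ≤ ε / 4 := by
    intro p
    have hsplit : (⟪f, itT ι S D p g⟫ : ℂ) - ⟪f', itT ι S D p g'⟫
        = ⟪f - f', itT ι S D p g⟫ + ⟪f', itT ι S D p (g - g')⟫ := by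
      rw [inner_sub_left, map_sub, inner_sub_right]; ring
    have h1 := inner_itT_bound hdil D p (f - f') g
    have h2 := inner_itT_bound hdil D p f' (g - g')
    have hf'n : ‖f'‖ ≤ ‖f‖ + 1 := by
      have := norm_sub_norm_le f' f
      have h3 : ‖f' - f‖ = ‖f - f'‖ := norm_sub_rev _ _
      nlinarith [hf', hδ1]
    have hDC : ‖D‖ ≤ C := by rw [hCdef]; linarith
    have hgR : ‖g‖ ≤ R := by rw [hRdef]; nlinarith [norm_nonneg f]
    have hfR : ‖f‖ + 1 ≤ R := by rw [hRdef]; nlinarith [norm_nonneg g]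
    have hb1 : ‖(⟪f - f', itT ι S D p g⟫ : ℂ)‖ ≤ C * δ * R := by
      have hD0 : (0:ℝ) ≤ ‖D‖ := norm_nonneg _
      have := inner_itT_bound hdil D p (f - f') g
      have hle : ‖D‖ * ‖f - f'‖ * ‖g‖ ≤ C * δ * R := by
        have hff : ‖f - f'‖ ≤ δ := le_of_lt hf'
        have t1 : ‖D‖ * ‖f - f'‖ ≤ C * δ := mul_le_mul hDC hff (norm_nonneg _) hC.le
        exact mul_le_mul t1 hgR (norm_nonneg _) (by positivity)
      linarith
    have hb2 : ‖(⟪f', itT ι S D p (g - g')⟫ : ℂ)‖ ≤ C * δ * R := by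
      have hgg : ‖g - g'‖ ≤ δ := le_of_lt hg'
      have hle : ‖D‖ * ‖f'‖ * ‖g - g'‖ ≤ C * δ * R := by
        have t1 : ‖D‖ * ‖f'‖ ≤ C * R := le_trans
          (mul_le_mul hDC hf'n (norm_nonneg _) hC.le)
          (mul_le_mul_of_nonneg_left hfR hC.le)
        have t2 : ‖D‖ * ‖f'‖ * ‖g - g'‖ ≤ C * R * δ :=
          mul_le_mul t1 hgg (norm_nonneg _) (by positivity)
        calc ‖D‖ * ‖f'‖ * ‖g - g'‖ ≤ C * R * δ := t2
          _ = C * δ * R := by ring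
      linarith
    have hCδR : C * δ * R ≤ ε / 8 := by
      have h7 : C * (ε / (8 * C * R)) * R = ε / 8 := by
        field_simp
      calc C * δ * R ≤ C * (ε / (8 * C * R)) * R :=
            mul_le_mul_of_nonneg_right
              (mul_le_mul_of_nonneg_left hδ2 hC.le) hR.le
        _ = ε / 8 := h7
    calc ‖(⟪f, itT ι S D p g⟫ : ℂ) - ⟪f', itT ι S D p g'⟫‖
        ≤ ‖(⟪f - f', itT ι S D p g⟫ : ℂ)‖ + ‖(⟪f', itT ι S D p (g - g')⟫ : ℂ)‖ := by
          rw [hsplit]; exact norm_add_le _ _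
      _ ≤ C * δ * R + C * δ * R := add_le_add hb1 hb2
      _ ≤ ε / 8 + ε / 8 := add_le_add hCδR hCδR
      _ = ε / 4 := by ring
  have heq := hN m hm n hn
  rw [dist_eq_norm]
  have hsplit2 : (⟪f, itT ι S D m g⟫ : ℂ) - ⟪f, itT ι S D n g⟫
      = ((⟪f, itT ι S D m g⟫ : ℂ) - ⟪f', itT ι S D m g'⟫)
        + ((⟪f', itT ι S D n g'⟫ : ℂ) - ⟪f, itT ι S D n g⟫) := by
    rw [heq]; ring
  calc ‖(⟪f, itT ι S D m g⟫ : ℂ) - ⟪f, itT ι S D n g⟫‖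
      ≤ ‖(⟪f, itT ι S D m g⟫ : ℂ) - ⟪f', itT ι S D m g'⟫‖
        + ‖(⟪f', itT ι S D n g'⟫ : ℂ) - ⟪f, itT ι S D n g⟫‖ := by
        rw [hsplit2]; exact norm_add_le _ _
    _ ≤ ε / 4 + ε / 4 := by
        refine add_le_add (hdiff m) ?_
        rw [norm_sub_rev]; exact hdiff n
    _ < ε := by linarith

end CLift
namespace CLift

variable {d : ℕ} {K H : Type*}
    [NormedAddCommGroup K] [InnerProductSpace ℂ K] [CompleteSpace K]
    [NormedAddCommGroup H] [InnerProductSpace ℂ H] [CompleteSpace H]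
    {v : Fin d → K →L[ℂ] K} {ι : K →L[ℂ] H} {S : Fin d → H →L[ℂ] H}

/-- Existence of the WOT limit operator. -/
lemma exists_limit_op (hdil : IsMinimalDilation v ι S) {D : K →L[ℂ] K}
    (hD : (∑ k : Fin d, v k ∘L D ∘L adjoint (v k)) = D) :
    ∃ X' : H →L[ℂ] H,
      (∀ f g : H, Tendsto (fun n => (⟪f, itT ι S D n g⟫ : ℂ)) atTop (nhds ⟪f, X' g⟫)) ∧
      ‖X'‖ ≤ ‖D‖ := by
  have conv := fun f g => wot_cauchy hdil hD f g
  set L : H → H → ℂ := fun f g => (conv f g).choose with hLdef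
  have hL : ∀ f g, Tendsto (fun n => (⟪f, itT ι S D n g⟫ : ℂ)) atTop (nhds (L f g)) :=
    fun f g => (conv f g).choose_spec
  have hLb : ∀ f g, ‖L f g‖ ≤ ‖D‖ * ‖f‖ * ‖g‖ := by
    intro f g
    have h1 : Tendsto (fun n => ‖(⟪f, itT ι S D n g⟫ : ℂ)‖) atTop (nhds ‖L f g‖) :=
      (hL f g).norm
    exact le_of_tendsto h1 (Filter.Eventually.of_forall fun n => inner_itT_bound hdil D n f g)
  -- linearity in each slot
  have hL_add_l : ∀ f₁ f₂ g, L (f₁ + f₂) g = L f₁ g + L f₂ g := by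
    intro f₁ f₂ g
    refine tendsto_nhds_unique (hL (f₁ + f₂) g) ?_
    have := (hL f₁ g).add (hL f₂ g)
    simpa only [← inner_add_left] using this
  have hL_smul_l : ∀ (a : ℂ) f g, L (a • f) g = starRingEnd ℂ a * L f g := by
    intro a f g
    refine tendsto_nhds_unique (hL (a • f) g) ?_
    have := (hL f g).const_mul (starRingEnd ℂ a)
    simpa only [← inner_smul_left] using this
  have hL_add_r : ∀ f g₁ g₂, L f (g₁ + g₂) = L f g₁ + L f g₂ := by
    intro f g₁ g₂
    refine tendsto_nhds_unique (hL f (g₁ + g₂)) ?_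
    have := (hL f g₁).add (hL f g₂)
    simpa only [← inner_add_right, ← map_add] using this
  have hL_smul_r : ∀ (a : ℂ) f g, L f (a • g) = a * L f g := by
    intro a f g
    refine tendsto_nhds_unique (hL f (a • g)) ?_
    have := (hL f g).const_mul a
    simpa only [← inner_smul_right, ← map_smul] using this
  -- Riesz representation for each g
  have hriesz : ∀ g : H, ∃ y : H, ∀ f : H, (⟪f, y⟫ : ℂ) = L f g := by
    intro g
    have φlin : IsLinearMap ℂ (fun f : H => (starRingEnd ℂ) (L f g)) := by
      constructor
      · intro f₁ f₂; rw [hL_add_l]; exact map_add _ _ _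
      · intro a f
        simp only [hL_smul_l, map_mul, starRingEnd_self_apply, smul_eq_mul]
    set φ₀ : H →ₗ[ℂ] ℂ := IsLinearMap.mk' _ φlin with hφ₀
    have hφbound : ∀ f : H, ‖φ₀ f‖ ≤ (‖D‖ * ‖g‖) * ‖f‖ := by
      intro f
      have : ‖φ₀ f‖ = ‖L f g‖ := by
        simp only [hφ₀, IsLinearMap.mk'_apply, RCLike.norm_conj]
      rw [this]
      calc ‖L f g‖ ≤ ‖D‖ * ‖f‖ * ‖g‖ := hLb f g
        _ = (‖D‖ * ‖g‖) * ‖f‖ := by ring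
    set φ : H →L[ℂ] ℂ := LinearMap.mkContinuous φ₀ (‖D‖ * ‖g‖) hφbound with hφ
    refine ⟨(InnerProductSpace.toDual ℂ H).symm φ, fun f => ?_⟩
    have h2 : (⟪(InnerProductSpace.toDual ℂ H).symm φ, f⟫ : ℂ) = φ f :=
      InnerProductSpace.toDual_symm_apply
    have h3 : (⟪f, (InnerProductSpace.toDual ℂ H).symm φ⟫ : ℂ)
        = starRingEnd ℂ (φ f) := by
      rw [← inner_conj_symm, h2]
    rw [h3, hφ]
    simp only [LinearMap.mkContinuous_apply, hφ₀, IsLinearMap.mk'_apply]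
    exact starRingEnd_self_apply _
  choose y hy using hriesz
  have hy_add : ∀ g₁ g₂, y (g₁ + g₂) = y g₁ + y g₂ := by
    intro g₁ g₂
    refine ext_inner_left ℂ fun f => ?_
    rw [hy _ f, inner_add_right, hy _ f, hy _ f, hL_add_r]
  have hy_smul : ∀ (a : ℂ) g, y (a • g) = a • y g := by
    intro a g
    refine ext_inner_left ℂ fun f => ?_
    rw [hy _ f, inner_smul_right, hy _ f, hL_smul_r]
  have hy_bound : ∀ g, ‖y g‖ ≤ ‖D‖ * ‖g‖ := by
    intro g
    have h1 : ‖y g‖ ^ 2 = RCLike.re (⟪y g, y g⟫ : ℂ) := (inner_self_eq_norm_sq (𝕜 := ℂ) _).symm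
    have h2 : RCLike.re (⟪y g, y g⟫ : ℂ) ≤ ‖(⟪y g, y g⟫ : ℂ)‖ := RCLike.re_le_norm _
    have h3 : ‖(⟪y g, y g⟫ : ℂ)‖ = ‖L (y g) g‖ := by rw [hy]
    have h4 : ‖L (y g) g‖ ≤ ‖D‖ * ‖y g‖ * ‖g‖ := hLb _ _
    by_cases h0 : ‖y g‖ = 0
    · rw [h0]; positivity
    · have hpos : 0 < ‖y g‖ := lt_of_le_of_ne (norm_nonneg _) (Ne.symm h0)
      nlinarith
  set X₀ : H →ₗ[ℂ] H :=
    { toFun := y, map_add' := hy_add, map_smul' := hy_smul } with hX₀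
  set X' : H →L[ℂ] H := LinearMap.mkContinuous X₀ ‖D‖
    (fun g => by simpa [hX₀] using hy_bound g) with hX'
  refine ⟨X', fun f g => ?_, ?_⟩
  · have : (⟪f, X' g⟫ : ℂ) = L f g := by
      rw [hX']
      simp only [LinearMap.mkContinuous_apply, hX₀, LinearMap.coe_mk, AddHom.coe_mk]
      exact hy g f
    rw [this]; exact hL f g
  · exact (LinearMap.mkContinuous_norm_le _ (norm_nonneg D) _)

end CLift
namespace CLift

variable {d : ℕ} {K H : Type*}
    [NormedAddCommGroup K] [InnerProductSpace ℂ K] [CompleteSpace K]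
    [NormedAddCommGroup H] [InnerProductSpace ℂ H] [CompleteSpace H]
    {v : Fin d → K →L[ℂ] K} {ι : K →L[ℂ] H} {S : Fin d → H →L[ℂ] H}

/-- The full package: WOT limit with commutation, compression and norm bound. -/
lemma wot_limit (hdil : IsMinimalDilation v ι S) {D : K →L[ℂ] K}
    (hD : (∑ k : Fin d, v k ∘L D ∘L adjoint (v k)) = D) :
    ∃ X' : H →L[ℂ] H,
      (∀ f g : H, Tendsto (fun n => (⟪f, itT ι S D n g⟫ : ℂ)) atTop (nhds ⟪f, X' g⟫)) ∧
      (∀ k : Fin d, Commute X' (S k) ∧ Commute X' (adjoint (S k))) ∧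
      adjoint ι ∘L X' ∘L ι = D ∧ ‖X'‖ ≤ ‖D‖ := by
  obtain ⟨X', hX', hn⟩ := exists_limit_op hdil hD
  have hTS : ∀ (n : ℕ) (k : Fin d) (g : H),
      itT ι S D (n + 1) (S k g) = S k (itT ι S D n g) := by
    intro n k g
    rw [itT_succ]
    simpa [ContinuousLinearMap.mul_apply] using
      DFunLike.congr_fun (lam_mul_S hdil.1 (itT ι S D n) k) g
  have hST : ∀ (n : ℕ) (k : Fin d) (g : H),
      itT ι S D n (adjoint (S k) g) = adjoint (S k) (itT ι S D (n + 1) g) := by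
    intro n k g
    rw [itT_succ]
    simpa [ContinuousLinearMap.mul_apply] using
      (DFunLike.congr_fun (Sadj_mul_lam hdil.1 (itT ι S D n) k) g).symm
  have hcomm : ∀ k : Fin d, Commute X' (S k) ∧ Commute X' (adjoint (S k)) := by
    intro k
    constructor
    · -- X' * S k = S k * X'
      have : X' ∘L S k = S k ∘L X' := by
        ext g
        refine ext_inner_left ℂ fun f => ?_
        simp only [comp_apply]
        have t1 : Tendsto (fun n => (⟪f, itT ι S D (n + 1) (S k g)⟫ : ℂ)) atTop
            (nhds ⟪f, X' (S k g)⟫) :=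
          (hX' f (S k g)).comp (tendsto_add_atTop_nat 1)
        have t2 : Tendsto (fun n => (⟪f, itT ι S D (n + 1) (S k g)⟫ : ℂ)) atTop
            (nhds ⟪f, S k (X' g)⟫) := by
          have heq : (fun n => (⟪f, itT ι S D (n + 1) (S k g)⟫ : ℂ))
              = fun n => ⟪adjoint (S k) f, itT ι S D n g⟫ := by
            funext n
            rw [hTS n k g, ← ContinuousLinearMap.adjoint_inner_left]
          rw [heq, show (⟪f, S k (X' g)⟫ : ℂ) = ⟪adjoint (S k) f, X' g⟫ from
            (ContinuousLinearMap.adjoint_inner_left _ _ _).symm]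
          exact hX' (adjoint (S k) f) g
        exact tendsto_nhds_unique t1 t2
      exact ContinuousLinearMap.ext fun g => by
        simpa [ContinuousLinearMap.mul_apply] using DFunLike.congr_fun this g
    · have : X' ∘L adjoint (S k) = adjoint (S k) ∘L X' := by
        ext g
        refine ext_inner_left ℂ fun f => ?_
        simp only [comp_apply]
        have t1 : Tendsto (fun n => (⟪f, itT ι S D n (adjoint (S k) g)⟫ : ℂ)) atTop
            (nhds ⟪f, X' (adjoint (S k) g)⟫) := hX' f (adjoint (S k) g)
        have t2 : Tendsto (fun n => (⟪f, itT ι S D n (adjoint (S k) g)⟫ : ℂ)) atTop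
            (nhds ⟪f, adjoint (S k) (X' g)⟫) := by
          have heq : (fun n => (⟪f, itT ι S D n (adjoint (S k) g)⟫ : ℂ))
              = fun n => ⟪S k f, itT ι S D (n + 1) g⟫ := by
            funext n
            rw [hST n k g, ContinuousLinearMap.adjoint_inner_right]
          rw [heq, show (⟪f, adjoint (S k) (X' g)⟫ : ℂ) = ⟪S k f, X' g⟫ from
            ContinuousLinearMap.adjoint_inner_right _ _ _]
          exact (hX' (S k f) g).comp (tendsto_add_atTop_nat 1)
        exact tendsto_nhds_unique t1 t2
      exact ContinuousLinearMap.ext fun g => by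
        simpa [ContinuousLinearMap.mul_apply] using DFunLike.congr_fun this g
  refine ⟨X', hX', hcomm, ?_, hn⟩
  ext b
  refine ext_inner_left ℂ fun a => ?_
  simp only [comp_apply]
  have t1 : Tendsto (fun n => (⟪ι a, itT ι S D n (ι b)⟫ : ℂ)) atTop
      (nhds ⟪ι a, X' (ι b)⟫) := hX' (ι a) (ι b)
  have t2 : Tendsto (fun n => (⟪ι a, itT ι S D n (ι b)⟫ : ℂ)) atTop (nhds ⟪a, D b⟫) := by
    have heq : (fun n => (⟪ι a, itT ι S D n (ι b)⟫ : ℂ)) = fun _ => (⟪a, D b⟫ : ℂ) := by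
      funext n; exact inner_iterate hdil hD n a b
    rw [heq]; exact tendsto_const_nhds
  have h3 := tendsto_nhds_unique t1 t2
  rw [← ContinuousLinearMap.adjoint_inner_right] at h3
  exact h3

end CLift
namespace CLift

variable {d : ℕ} {K H : Type*}
    [NormedAddCommGroup K] [InnerProductSpace ℂ K] [CompleteSpace K]
    [NormedAddCommGroup H] [InnerProductSpace ℂ H] [CompleteSpace H]
    {v : Fin d → K →L[ℂ] K} {ι : K →L[ℂ] H} {S : Fin d → H →L[ℂ] H}

lemma compr_adjoint (X : H →L[ℂ] H) :
    adjoint (adjoint ι ∘L X ∘L ι) = adjoint ι ∘L adjoint X ∘L ι := by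
  rw [adjoint_comp, adjoint_comp, adjoint_adjoint, comp_assoc]

lemma commute_adjoint {X : H →L[ℂ] H}
    (h : ∀ k, Commute X (S k) ∧ Commute X (adjoint (S k))) :
    ∀ k, Commute (adjoint X) (S k) ∧ Commute (adjoint X) (adjoint (S k)) := by
  intro k
  constructor
  · have := congrArg star (h k).2.eq
    simp only [star_mul, star_eq_adjoint, adjoint_adjoint] at this
    exact this.symm
  · have := congrArg star (h k).1.eq
    simp only [star_mul, star_eq_adjoint, adjoint_adjoint] at this
    exact this.symm

lemma compr_fix (hdil : IsMinimalDilation v ι S) {X' : H →L[ℂ] H}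
    (hcomm : ∀ k, Commute X' (S k)) :
    (∑ k : Fin d, v k ∘L (adjoint ι ∘L X' ∘L ι) ∘L adjoint (v k)) = adjoint ι ∘L X' ∘L ι := by
  rw [← compr_lam hdil X', lam_fix hdil.1 hcomm]

lemma compr_norm_le (hdil : IsMinimalDilation v ι S) (X : H →L[ℂ] H) :
    ‖adjoint ι ∘L X ∘L ι‖ ≤ ‖X‖ := by
  have h1 : ‖adjoint ι ∘L X ∘L ι‖ ≤ ‖adjoint ι‖ * (‖X‖ * ‖ι‖) :=
    le_trans (ContinuousLinearMap.opNorm_comp_le _ _)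
      (mul_le_mul_of_nonneg_left (ContinuousLinearMap.opNorm_comp_le _ _) (norm_nonneg _))
  have h2 := norm_iota_le hdil
  have h3 := norm_iotaAdj_le hdil
  have h4 : ‖X‖ * ‖ι‖ ≤ ‖X‖ := mul_le_of_le_one_right (norm_nonneg X) h2
  have h5 : ‖adjoint ι‖ * (‖X‖ * ‖ι‖) ≤ 1 * (‖X‖ * ‖ι‖) :=
    mul_le_mul_of_nonneg_right h3 (by positivity)
  nlinarith

lemma corner_pos (hdil : IsMinimalDilation v ι S) {D : K →L[ℂ] K} (hDpos : D.IsPositive) :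
    (ι ∘L D ∘L adjoint ι).IsPositive := by
  refine isPositive_def'.mpr ⟨?_, ?_⟩
  · rw [IsSelfAdjoint, star_eq_adjoint, adjoint_comp, adjoint_comp, adjoint_adjoint,
      ← star_eq_adjoint (A := D), hDpos.isSelfAdjoint.star_eq, comp_assoc]
  · intro x
    rw [ContinuousLinearMap.reApplyInnerSelf_apply, comp_apply, comp_apply,
      ← ContinuousLinearMap.adjoint_inner_right]
    exact hDpos.2 (adjoint ι x)

lemma itT_pos (hdil : IsMinimalDilation v ι S) {D : K →L[ℂ] K} (hDpos : D.IsPositive)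
    (n : ℕ) : (itT ι S D n).IsPositive := by
  induction n with
  | zero => exact corner_pos hdil hDpos
  | succ n ih => rw [itT_succ]; exact lam_pos hdil.1 ih

end CLift

open CLift

/-- In a minimal Popescu dilation `(H, P, S)` of `(K, v)` (`P = ι ∘ ι*`):
for every `D ∈ B(K)` fixed by `x ↦ ∑ₖ vₖ x vₖ*` (identified with `P D P = ι D ι* ∈ B(H)`),
the operators `Λⁿ(D)` converge in the weak operator topology to an operator `X'` commuting
with every `Sₖ` and `Sₖ*` and compressing to `D`; moreover `X' ↦ P X' P` is an isometric
order isomorphism from the self-adjoint part of the commutant `{Sₖ, Sₖ*}'` onto the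
self-adjoint part of `B_τ(K) = {x : ∑ₖ vₖ x vₖ* = x}`. -/
theorem commutant_lifting {d : ℕ} (hd : 2 ≤ d)
    {K H : Type*} [NormedAddCommGroup K] [InnerProductSpace ℂ K] [CompleteSpace K]
    [NormedAddCommGroup H] [InnerProductSpace ℂ H] [CompleteSpace H]
    (v : Fin d → K →L[ℂ] K) (hv : IsPopescuSystem v)
    (ι : K →L[ℂ] H) (S : Fin d → H →L[ℂ] H) (hdil : IsMinimalDilation v ι S) :
    (∀ D : K →L[ℂ] K, (∑ k : Fin d, v k ∘L D ∘L adjoint (v k)) = D →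
      ∃ X' : H →L[ℂ] H,
        (∀ f g : H,
          Filter.Tendsto (fun n : ℕ => ⟪f, ((cLam S)^[n] (ι ∘L D ∘L adjoint ι)) g⟫)
            Filter.atTop (nhds ⟪f, X' g⟫)) ∧
        (∀ k : Fin d, Commute X' (S k) ∧ Commute X' (adjoint (S k))) ∧
        adjoint ι ∘L X' ∘L ι = D) ∧
    -- the compression map on self-adjoint elements of the commutant lands in `B_τ(K)`
    -- and is isometric
    (∀ X' : H →L[ℂ] H, (∀ k : Fin d, Commute X' (S k) ∧ Commute X' (adjoint (S k))) →
      IsSelfAdjoint X' →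
        (∑ k : Fin d, v k ∘L (adjoint ι ∘L X' ∘L ι) ∘L adjoint (v k)) = adjoint ι ∘L X' ∘L ι ∧
        ‖adjoint ι ∘L X' ∘L ι‖ = ‖X'‖) ∧
    -- it is bijective onto the self-adjoint part of `B_τ(K)`
    (∀ D : K →L[ℂ] K, IsSelfAdjoint D → (∑ k : Fin d, v k ∘L D ∘L adjoint (v k)) = D →
      ∃! X' : H →L[ℂ] H,
        (∀ k : Fin d, Commute X' (S k) ∧ Commute X' (adjoint (S k))) ∧ IsSelfAdjoint X' ∧
          adjoint ι ∘L X' ∘L ι = D) ∧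
    -- and it is an order isomorphism
    (∀ X₁ X₂ : H →L[ℂ] H,
      (∀ k : Fin d, Commute X₁ (S k) ∧ Commute X₁ (adjoint (S k))) →
      (∀ k : Fin d, Commute X₂ (S k) ∧ Commute X₂ (adjoint (S k))) →
      IsSelfAdjoint X₁ → IsSelfAdjoint X₂ →
        ((X₂ - X₁).IsPositive ↔ (adjoint ι ∘L (X₂ - X₁) ∘L ι).IsPositive)) := by
  refine ⟨?_, ?_, ?_, ?_⟩
  · -- existence of the WOT limit
    intro D hD
    obtain ⟨X', h1, h2, h3, -⟩ := wot_limit hdil hD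
    exact ⟨X', h1, h2, h3⟩
  · -- compressions of self-adjoint commutant elements: fixed points, isometric
    intro X' hcomm hsa
    have fix1 := compr_fix hdil (fun k => (hcomm k).1)
    refine ⟨fix1, ?_⟩
    obtain ⟨Y, hYt, hYcomm, hYcompr, hYn⟩ := wot_limit hdil fix1
    have hXY : X' = Y := commutant_ext hdil hcomm hYcomm (by rw [hYcompr])
    refine le_antisymm (compr_norm_le hdil X') ?_
    calc ‖X'‖ = ‖Y‖ := by rw [hXY]
      _ ≤ ‖adjoint ι ∘L X' ∘L ι‖ := hYn
  · -- bijectivity onto self-adjoint fixed points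
    intro D hDsa hD
    obtain ⟨X', hXt, hXcomm, hXcompr, -⟩ := wot_limit hdil hD
    have hadjcompr : adjoint ι ∘L adjoint X' ∘L ι = D := by
      rw [← compr_adjoint, hXcompr, ← star_eq_adjoint, hDsa.star_eq]
    have hsa' : adjoint X' = X' :=
      commutant_ext hdil (commute_adjoint hXcomm) hXcomm (by rw [hadjcompr, hXcompr])
    have hsaX : IsSelfAdjoint X' := by rw [IsSelfAdjoint, star_eq_adjoint]; exact hsa'
    refine ⟨X', ⟨hXcomm, hsaX, hXcompr⟩, ?_⟩
    rintro Z ⟨hZcomm, hZsa, hZcompr⟩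
    exact commutant_ext hdil hZcomm hXcomm (by rw [hZcompr, hXcompr])
  · -- order isomorphism
    intro X₁ X₂ h1 h2 hs1 hs2
    have hXcomm : ∀ k, Commute (X₂ - X₁) (S k) ∧ Commute (X₂ - X₁) (adjoint (S k)) :=
      fun k => ⟨(h2 k).1.sub_left (h1 k).1, (h2 k).2.sub_left (h1 k).2⟩
    have hXsa : IsSelfAdjoint (X₂ - X₁) := hs2.sub hs1
    constructor
    · intro hpos
      refine isPositive_def'.mpr ⟨?_, ?_⟩
      · rw [IsSelfAdjoint, star_eq_adjoint, compr_adjoint, ← star_eq_adjoint (A := X₂ - X₁),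
          hpos.isSelfAdjoint.star_eq]
      · intro a
        rw [ContinuousLinearMap.reApplyInnerSelf_apply, comp_apply, comp_apply,
          ContinuousLinearMap.adjoint_inner_left]
        exact hpos.2 (ι a)
    · intro hpos
      have fix1 := compr_fix hdil (fun k => (hXcomm k).1)
      obtain ⟨Y, hYt, hYcomm, hYcompr, -⟩ := wot_limit hdil fix1
      have hXY : X₂ - X₁ = Y := commutant_ext hdil hXcomm hYcomm (by rw [hYcompr])
      refine isPositive_def'.mpr ⟨hXsa, fun x => ?_⟩
      rw [ContinuousLinearMap.reApplyInnerSelf_apply, inner_re_symm]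
      have ht : Tendsto
          (fun n => RCLike.re (⟪x, itT ι S (adjoint ι ∘L (X₂ - X₁) ∘L ι) n x⟫ : ℂ))
          atTop (nhds (RCLike.re (⟪x, Y x⟫ : ℂ))) :=
        ((RCLike.continuous_re.tendsto _).comp (hYt x x))
      have hterm : ∀ n, 0 ≤ RCLike.re (⟪x, itT ι S (adjoint ι ∘L (X₂ - X₁) ∘L ι) n x⟫ : ℂ) := by
        intro n
        rw [inner_re_symm]
        have := (itT_pos hdil hpos n).2 x
        rwa [ContinuousLinearMap.reApplyInnerSelf_apply] at this
      have h0 : 0 ≤ RCLike.re (⟪x, Y x⟫ : ℂ) :=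
        ge_of_tendsto ht (Filter.Eventually.of_forall hterm)
      rw [hXY]
      exact h0
end
end

section
/- Let (H, P, (S_1,…,S_d)) be a minimal Popescu dilation of a Popescu system (v_1,…,v_d) on K. Then {v_k, v_k* : 1 ≤ k ≤ d}' ⊆ B_τ(K) := {x ∈ B(K) : Σ_{k=1}^d v_k x v_k* = x}, and equality {v_k, v_k* : 1 ≤ k ≤ d}' = B_τ(K) holds if and only if P belongs to the von Neumann algebra {S_k, S_k* : 1 ≤ k ≤ d}'' generated by the Cuntz family. -/
open ContinuousLinearMap Filter
open scoped ComplexInnerProductSpace ComplexOrder Topology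

noncomputable section

set_option linter.unusedSectionVars false
set_option linter.unusedVariables false
set_option maxHeartbeats 1000000

namespace Pop

variable {d : ℕ} {K H : Type*}
  [NormedAddCommGroup K] [InnerProductSpace ℂ K] [CompleteSpace K]
  [NormedAddCommGroup H] [InnerProductSpace ℂ H] [CompleteSpace H]

lemma cword_nil (S : Fin d → H →L[ℂ] H) (h : H) : cword S [] h = h := rfl

lemma cword_cons (S : Fin d → H →L[ℂ] H) (i : Fin d) (I : List (Fin d)) (h : H) :
    cword S (i :: I) h = S i (cword S I h) := by
  simp [cword, List.map_cons, List.prod_cons, ContinuousLinearMap.mul_apply]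

variable {v : Fin d → K →L[ℂ] K} {ι : K →L[ℂ] H} {S : Fin d → H →L[ℂ] H}

/-! ### Basic consequences of the dilation axioms -/

lemma iso_apply (hiso : adjoint ι ∘L ι = 1) (ξ : K) : adjoint ι (ι ξ) = ξ := by
  have := congrArg (fun T : K →L[ℂ] K => T ξ) hiso; simpa using this

lemma inner_iso (hiso : adjoint ι ∘L ι = 1) (ξ η : K) : ⟪ι ξ, ι η⟫ = ⟪ξ, η⟫ := by
  rw [← ContinuousLinearMap.adjoint_inner_right, iso_apply hiso]

lemma norm_iso (hiso : adjoint ι ∘L ι = 1) (ξ : K) : ‖ι ξ‖ = ‖ξ‖ := by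
  have h1 : (‖ι ξ‖ : ℝ)^2 = ‖ξ‖^2 := by
    rw [← inner_self_eq_norm_sq (𝕜 := ℂ), ← inner_self_eq_norm_sq (𝕜 := ℂ),
      inner_iso hiso]
  have := congrArg Real.sqrt h1
  simpa [Real.sqrt_sq, norm_nonneg] using this

lemma norm_adj_iso_le (hiso : adjoint ι ∘L ι = 1) (h : H) : ‖adjoint ι h‖ ≤ ‖h‖ := by
  by_cases h0 : adjoint ι h = 0
  · simp [h0]
  have h1 : (‖adjoint ι h‖ : ℝ)^2 = RCLike.re (⟪h, ι (adjoint ι h)⟫) := by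
    rw [← inner_self_eq_norm_sq (𝕜 := ℂ), ContinuousLinearMap.adjoint_inner_left]
  have h2 : RCLike.re (⟪h, ι (adjoint ι h)⟫) ≤ ‖h‖ * ‖adjoint ι h‖ := by
    calc RCLike.re (⟪h, ι (adjoint ι h)⟫) ≤ ‖(⟪h, ι (adjoint ι h)⟫)‖ :=
          RCLike.re_le_norm _
      _ ≤ ‖h‖ * ‖ι (adjoint ι h)‖ := norm_inner_le_norm _ _
      _ = ‖h‖ * ‖adjoint ι h‖ := by rw [norm_iso hiso]
  have h3 : (‖adjoint ι h‖ : ℝ)^2 ≤ ‖h‖ * ‖adjoint ι h‖ := h1 ▸ h2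
  have hpos : (0:ℝ) < ‖adjoint ι h‖ := by
    simpa [norm_pos_iff] using h0
  nlinarith

/-- `Sₖ* ι = ι vₖ*` (pointwise). -/
lemma Sadj_iota (hiso : adjoint ι ∘L ι = 1)
    (hinv : ∀ k, (ι ∘L adjoint ι) ∘L adjoint (S k) ∘L (ι ∘L adjoint ι)
      = adjoint (S k) ∘L (ι ∘L adjoint ι))
    (hcomp : ∀ k, adjoint ι ∘L S k ∘L ι = v k) (k : Fin d) (ξ : K) :
    adjoint (S k) (ι ξ) = ι (adjoint (v k) ξ) := by
  have h1 : adjoint (S k) (ι ξ) = ι (adjoint ι (adjoint (S k) (ι ξ))) := by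
    have := congrArg (fun T : H →L[ℂ] H => T (ι ξ)) (hinv k)
    simpa [iso_apply hiso] using this.symm
  have h2 : adjoint ι (adjoint (S k) (ι ξ)) = adjoint (v k) ξ := by
    have hv : adjoint (v k) = adjoint ι ∘L (adjoint (S k) ∘L ι) := by
      rw [← hcomp k]
      simp [ContinuousLinearMap.adjoint_comp, ContinuousLinearMap.comp_assoc]
    rw [hv]; rfl
  rw [h1, h2]

/-- `ι* Sₖ = vₖ ι*` (pointwise). -/
lemma iota_adj_S (hiso : adjoint ι ∘L ι = 1)
    (hinv : ∀ k, (ι ∘L adjoint ι) ∘L adjoint (S k) ∘L (ι ∘L adjoint ι)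
      = adjoint (S k) ∘L (ι ∘L adjoint ι))
    (hcomp : ∀ k, adjoint ι ∘L S k ∘L ι = v k) (k : Fin d) (h : H) :
    adjoint ι (S k h) = v k (adjoint ι h) := by
  apply ext_inner_left ℂ
  intro ξ
  calc ⟪ξ, adjoint ι (S k h)⟫ = ⟪ι ξ, S k h⟫ :=
        ContinuousLinearMap.adjoint_inner_right ι ξ (S k h)
    _ = ⟪adjoint (S k) (ι ξ), h⟫ :=
        (ContinuousLinearMap.adjoint_inner_left (S k) h (ι ξ)).symm
    _ = ⟪ι (adjoint (v k) ξ), h⟫ := by rw [Sadj_iota hiso hinv hcomp]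
    _ = ⟪adjoint (v k) ξ, adjoint ι h⟫ :=
        (ContinuousLinearMap.adjoint_inner_right ι _ h).symm
    _ = ⟪ξ, v k (adjoint ι h)⟫ :=
        ContinuousLinearMap.adjoint_inner_left (v k) (adjoint ι h) ξ

/-- orthogonality of ranges: `⟪Sᵢ a, Sⱼ b⟫ = δᵢⱼ ⟪a, b⟫`. -/
lemma Sadj_S (hortho : ∀ i j : Fin d, adjoint (S i) ∘L S j = if i = j then 1 else 0)
    (i j : Fin d) (b : H) :
    adjoint (S i) (S j b) = if i = j then b else 0 := by
  have := congrArg (fun T : H →L[ℂ] H => T b) (hortho i j)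
  simp only [ContinuousLinearMap.comp_apply] at this
  rw [this]
  by_cases hij : i = j <;> simp [hij]

lemma inner_S_S (hortho : ∀ i j : Fin d, adjoint (S i) ∘L S j = if i = j then 1 else 0)
    (i j : Fin d) (a b : H) :
    ⟪S i a, S j b⟫ = if i = j then ⟪a, b⟫ else 0 := by
  rw [← ContinuousLinearMap.adjoint_inner_right, Sadj_S hortho]
  by_cases hij : i = j <;> simp [hij]

/-! ### The transfer operator and approximating sequence -/

def Phi (S : Fin d → H →L[ℂ] H) (Y : H →L[ℂ] H) : H →L[ℂ] H :=
  ∑ k : Fin d, S k ∘L Y ∘L adjoint (S k)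

def psi (v : Fin d → K →L[ℂ] K) (x : K →L[ℂ] K) : K →L[ℂ] K :=
  ∑ k : Fin d, v k ∘L x ∘L adjoint (v k)

lemma Phi_apply (Y : H →L[ℂ] H) (h : H) :
    Phi S Y h = ∑ k : Fin d, S k (Y (adjoint (S k) h)) := by
  simp [Phi, ContinuousLinearMap.sum_apply]

lemma psi_apply (x : K →L[ℂ] K) (ξ : K) :
    psi v x ξ = ∑ k : Fin d, v k (x (adjoint (v k) ξ)) := by
  simp [psi, ContinuousLinearMap.sum_apply]

lemma Phi_S (hortho : ∀ i j : Fin d, adjoint (S i) ∘L S j = if i = j then 1 else 0)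
    (Y : H →L[ℂ] H) (k : Fin d) (h : H) :
    Phi S Y (S k h) = S k (Y h) := by
  rw [Phi_apply]
  have hterm : ∀ j : Fin d, S j (Y (adjoint (S j) (S k h)))
      = if j = k then S k (Y h) else 0 := by
    intro j
    rw [Sadj_S hortho]
    by_cases hjk : j = k <;> simp [hjk]
  rw [Finset.sum_congr rfl (fun j _ => hterm j)]
  simp

lemma Sadj_Phi (hortho : ∀ i j : Fin d, adjoint (S i) ∘L S j = if i = j then 1 else 0)
    (Y : H →L[ℂ] H) (k : Fin d) (h : H) :
    adjoint (S k) (Phi S Y h) = Y (adjoint (S k) h) := by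
  rw [Phi_apply, map_sum]
  have hterm : ∀ j : Fin d, adjoint (S k) (S j (Y (adjoint (S j) h)))
      = if k = j then Y (adjoint (S k) h) else 0 := by
    intro j
    rw [Sadj_S hortho]
    by_cases hkj : k = j
    · subst hkj; simp
    · simp [hkj]
  rw [Finset.sum_congr rfl (fun j _ => hterm j)]
  simp

lemma compress_Phi (hiso : adjoint ι ∘L ι = 1)
    (hinv : ∀ k, (ι ∘L adjoint ι) ∘L adjoint (S k) ∘L (ι ∘L adjoint ι)
      = adjoint (S k) ∘L (ι ∘L adjoint ι))
    (hcomp : ∀ k, adjoint ι ∘L S k ∘L ι = v k)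
    (Y : H →L[ℂ] H) (ξ : K) :
    adjoint ι (Phi S Y (ι ξ)) = ∑ k : Fin d, v k (adjoint ι (Y (ι (adjoint (v k) ξ)))) := by
  rw [Phi_apply, map_sum]
  refine Finset.sum_congr rfl (fun k _ => ?_)
  rw [Sadj_iota hiso hinv hcomp, iota_adj_S hiso hinv hcomp]

lemma norm_sq_Phi (hortho : ∀ i j : Fin d, adjoint (S i) ∘L S j = if i = j then 1 else 0)
    (Y : H →L[ℂ] H) (h : H) :
    (‖Phi S Y h‖ : ℝ)^2 = ∑ k : Fin d, ‖Y (adjoint (S k) h)‖^2 := by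
  have hinner : ⟪Phi S Y h, Phi S Y h⟫
      = ∑ k : Fin d, ⟪Y (adjoint (S k) h), Y (adjoint (S k) h)⟫ := by
    rw [Phi_apply, sum_inner]
    have hrow : ∀ j : Fin d, ⟪S j (Y (adjoint (S j) h)),
        ∑ k : Fin d, S k (Y (adjoint (S k) h))⟫
        = ⟪Y (adjoint (S j) h), Y (adjoint (S j) h)⟫ := by
      intro j
      rw [inner_sum]
      have : ∀ k : Fin d, ⟪S j (Y (adjoint (S j) h)), S k (Y (adjoint (S k) h))⟫
          = if j = k then ⟪Y (adjoint (S j) h), Y (adjoint (S j) h)⟫ else 0 := by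
        intro k
        rw [inner_S_S hortho]
        by_cases hjk : j = k
        · subst hjk; simp
        · simp [hjk]
      rw [Finset.sum_congr rfl (fun k _ => this k)]
      simp
    rw [Finset.sum_congr rfl (fun j _ => hrow j)]
  have := congrArg RCLike.re hinner
  rw [inner_self_eq_norm_sq] at this
  rw [this, map_sum]
  exact Finset.sum_congr rfl (fun k _ => by rw [inner_self_eq_norm_sq])

lemma sum_norm_sq_Sadj (hortho : ∀ i j : Fin d, adjoint (S i) ∘L S j = if i = j then 1 else 0)
    (hsum : ∑ k : Fin d, S k ∘L adjoint (S k) = 1) (h : H) :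
    ∑ k : Fin d, (‖adjoint (S k) h‖ : ℝ)^2 = ‖h‖^2 := by
  have h1 : ∀ k : Fin d, ⟪adjoint (S k) h, adjoint (S k) h⟫
      = ⟪h, S k (adjoint (S k) h)⟫ := fun k =>
    ContinuousLinearMap.adjoint_inner_left (S k) (adjoint (S k) h) h
  have h2 : (∑ k : Fin d, ⟪adjoint (S k) h, adjoint (S k) h⟫) = ⟪h, h⟫ := by
    rw [Finset.sum_congr rfl (fun k _ => h1 k), ← inner_sum]
    have : (∑ k : Fin d, S k (adjoint (S k) h)) = h := by
      have := congrArg (fun T : H →L[ℂ] H => T h) hsum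
      simpa [ContinuousLinearMap.sum_apply] using this
    rw [this]
  have := congrArg RCLike.re h2
  rw [map_sum, inner_self_eq_norm_sq] at this
  rw [← this]
  exact Finset.sum_congr rfl (fun k _ => by rw [inner_self_eq_norm_sq])

lemma norm_Phi_apply_le (hortho : ∀ i j : Fin d, adjoint (S i) ∘L S j = if i = j then 1 else 0)
    (hsum : ∑ k : Fin d, S k ∘L adjoint (S k) = 1)
    (Y : H →L[ℂ] H) (h : H) : ‖Phi S Y h‖ ≤ ‖Y‖ * ‖h‖ := by
  have hsq : (‖Phi S Y h‖ : ℝ)^2 ≤ (‖Y‖ * ‖h‖)^2 := by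
    rw [norm_sq_Phi hortho]
    calc ∑ k : Fin d, (‖Y (adjoint (S k) h)‖ : ℝ)^2
        ≤ ∑ k : Fin d, ‖Y‖^2 * ‖adjoint (S k) h‖^2 := by
          refine Finset.sum_le_sum (fun k _ => ?_)
          have := Y.le_opNorm (adjoint (S k) h)
          nlinarith [norm_nonneg (Y (adjoint (S k) h)), norm_nonneg (adjoint (S k) h),
            Y.opNorm_nonneg]
      _ = ‖Y‖^2 * ∑ k : Fin d, ‖adjoint (S k) h‖^2 := by rw [Finset.mul_sum]
      _ = ‖Y‖^2 * ‖h‖^2 := by rw [sum_norm_sq_Sadj hortho hsum]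
      _ = (‖Y‖ * ‖h‖)^2 := by ring
  have h0 : (0:ℝ) ≤ ‖Y‖ * ‖h‖ := by positivity
  nlinarith [norm_nonneg (Phi S Y h)]

def Xseq (ι : K →L[ℂ] H) (S : Fin d → H →L[ℂ] H) (x : K →L[ℂ] K) (n : ℕ) : H →L[ℂ] H :=
  (Phi S)^[n] (ι ∘L x ∘L adjoint ι)

lemma Xseq_zero (x : K →L[ℂ] K) (h : H) : Xseq ι S x 0 h = ι (x (adjoint ι h)) := rfl

lemma Xseq_succ (x : K →L[ℂ] K) (n : ℕ) :
    Xseq ι S x (n + 1) = Phi S (Xseq ι S x n) := by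
  simp [Xseq, Function.iterate_succ_apply']

lemma Xseq_norm_le (hortho : ∀ i j : Fin d, adjoint (S i) ∘L S j = if i = j then 1 else 0)
    (hsum : ∑ k : Fin d, S k ∘L adjoint (S k) = 1)
    (hiso : adjoint ι ∘L ι = 1)
    (x : K →L[ℂ] K) : ∀ n (h : H), ‖Xseq ι S x n h‖ ≤ ‖x‖ * ‖h‖ := by
  intro n
  induction n with
  | zero =>
    intro h
    rw [Xseq_zero, norm_iso hiso]
    calc ‖x (adjoint ι h)‖ ≤ ‖x‖ * ‖adjoint ι h‖ := x.le_opNorm _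
      _ ≤ ‖x‖ * ‖h‖ := by
        have := norm_adj_iso_le hiso h
        nlinarith [x.opNorm_nonneg]
  | succ n ih =>
    intro h
    rw [Xseq_succ]
    calc ‖Phi S (Xseq ι S x n) h‖ ≤ ‖Xseq ι S x n‖ * ‖h‖ :=
          norm_Phi_apply_le hortho hsum _ h
      _ ≤ ‖x‖ * ‖h‖ := by
        have hop : ‖Xseq ι S x n‖ ≤ ‖x‖ :=
          (Xseq ι S x n).opNorm_le_bound (norm_nonneg x) (ih)
        nlinarith [norm_nonneg h]

lemma compress_Xseq (hiso : adjoint ι ∘L ι = 1)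
    (hinv : ∀ k, (ι ∘L adjoint ι) ∘L adjoint (S k) ∘L (ι ∘L adjoint ι)
      = adjoint (S k) ∘L (ι ∘L adjoint ι))
    (hcomp : ∀ k, adjoint ι ∘L S k ∘L ι = v k)
    {x : K →L[ℂ] K} (hx : psi v x = x) :
    ∀ n (ξ : K), adjoint ι (Xseq ι S x n (ι ξ)) = x ξ := by
  intro n
  induction n with
  | zero => intro ξ; rw [Xseq_zero, iso_apply hiso, iso_apply hiso]
  | succ n ih =>
    intro ξ
    rw [Xseq_succ, compress_Phi hiso hinv hcomp]
    have : ∀ k : Fin d, v k (adjoint ι (Xseq ι S x n (ι (adjoint (v k) ξ))))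
        = v k (x (adjoint (v k) ξ)) := fun k => by rw [ih]
    rw [Finset.sum_congr rfl (fun k _ => this k), ← psi_apply, hx]

/-! ### Convergence of the approximating sequence -/

lemma inner_Phi_Phi (hortho : ∀ i j : Fin d, adjoint (S i) ∘L S j = if i = j then 1 else 0)
    (hiso : adjoint ι ∘L ι = 1)
    (hinv : ∀ k, (ι ∘L adjoint ι) ∘L adjoint (S k) ∘L (ι ∘L adjoint ι)
      = adjoint (S k) ∘L (ι ∘L adjoint ι))
    (hcomp : ∀ k, adjoint ι ∘L S k ∘L ι = v k)
    (A B : H →L[ℂ] H) (ξ : K) :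
    ⟪Phi S A (ι ξ), Phi S B (ι ξ)⟫
      = ∑ k : Fin d, ⟪A (ι (adjoint (v k) ξ)), B (ι (adjoint (v k) ξ))⟫ := by
  rw [Phi_apply, Phi_apply, sum_inner]
  have hrow : ∀ j : Fin d, ⟪S j (A (adjoint (S j) (ι ξ))),
      ∑ k : Fin d, S k (B (adjoint (S k) (ι ξ)))⟫
      = ⟪A (ι (adjoint (v j) ξ)), B (ι (adjoint (v j) ξ))⟫ := by
    intro j
    rw [inner_sum]
    have hterm : ∀ k : Fin d, ⟪S j (A (adjoint (S j) (ι ξ))), S k (B (adjoint (S k) (ι ξ)))⟫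
        = if j = k then ⟪A (ι (adjoint (v j) ξ)), B (ι (adjoint (v j) ξ))⟫ else 0 := by
      intro k
      rw [inner_S_S hortho]
      by_cases hjk : j = k
      · subst hjk; simp [Sadj_iota hiso hinv hcomp]
      · simp [hjk]
    rw [Finset.sum_congr rfl (fun k _ => hterm k)]
    simp
  rw [Finset.sum_congr rfl (fun j _ => hrow j)]

lemma inner_Xseq_eq (hortho : ∀ i j : Fin d, adjoint (S i) ∘L S j = if i = j then 1 else 0)
    (hiso : adjoint ι ∘L ι = 1)
    (hinv : ∀ k, (ι ∘L adjoint ι) ∘L adjoint (S k) ∘L (ι ∘L adjoint ι)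
      = adjoint (S k) ∘L (ι ∘L adjoint ι))
    (hcomp : ∀ k, adjoint ι ∘L S k ∘L ι = v k)
    {x : K →L[ℂ] K} (hx : psi v x = x) :
    ∀ n m (ξ : K), n ≤ m →
      ⟪Xseq ι S x n (ι ξ), Xseq ι S x m (ι ξ)⟫ = ⟪Xseq ι S x n (ι ξ), Xseq ι S x n (ι ξ)⟫ := by
  intro n
  induction n with
  | zero =>
    intro m ξ _
    have hbase : ∀ m', ⟪Xseq ι S x 0 (ι ξ), Xseq ι S x m' (ι ξ)⟫ = ⟪x ξ, x ξ⟫ := by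
      intro m'
      have h0 : Xseq ι S x 0 (ι ξ) = ι (x ξ) := by rw [Xseq_zero, iso_apply hiso]
      rw [h0, ← ContinuousLinearMap.adjoint_inner_right,
        compress_Xseq hiso hinv hcomp hx m' ξ]
    rw [hbase m, hbase 0]
  | succ n ih =>
    intro m ξ hm
    obtain ⟨m', rfl⟩ : ∃ m', m = m' + 1 := ⟨m - 1, by omega⟩
    have hnm' : n ≤ m' := by omega
    rw [Xseq_succ, Xseq_succ, inner_Phi_Phi hortho hiso hinv hcomp,
      inner_Phi_Phi hortho hiso hinv hcomp]
    exact Finset.sum_congr rfl (fun k _ => ih m' (adjoint (v k) ξ) hnm')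

lemma norm_sub_sq_Xseq (hortho : ∀ i j : Fin d, adjoint (S i) ∘L S j = if i = j then 1 else 0)
    (hiso : adjoint ι ∘L ι = 1)
    (hinv : ∀ k, (ι ∘L adjoint ι) ∘L adjoint (S k) ∘L (ι ∘L adjoint ι)
      = adjoint (S k) ∘L (ι ∘L adjoint ι))
    (hcomp : ∀ k, adjoint ι ∘L S k ∘L ι = v k)
    {x : K →L[ℂ] K} (hx : psi v x = x) (ξ : K) {n m : ℕ} (hnm : n ≤ m) :
    ‖Xseq ι S x m (ι ξ) - Xseq ι S x n (ι ξ)‖^2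
      = ‖Xseq ι S x m (ι ξ)‖^2 - ‖Xseq ι S x n (ι ξ)‖^2 := by
  set a := Xseq ι S x m (ι ξ)
  set b := Xseq ι S x n (ι ξ)
  have hre : RCLike.re (⟪a, b⟫ : ℂ) = ‖b‖^2 := by
    have h1 : (⟪b, a⟫ : ℂ) = ⟪b, b⟫ := inner_Xseq_eq hortho hiso hinv hcomp hx n m ξ hnm
    have h2 : (⟪a, b⟫ : ℂ) = starRingEnd ℂ ⟪b, a⟫ := (inner_conj_symm _ _).symm
    rw [h2, h1]
    have : RCLike.re (starRingEnd ℂ (⟪b, b⟫ : ℂ)) = RCLike.re (⟪b, b⟫ : ℂ) := by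
      simp [RCLike.conj_re]
    rw [this, inner_self_eq_norm_sq]
  have := @norm_sub_sq ℂ _ _ _ _ a b
  rw [hre] at this
  linarith

lemma cauchy_Xseq_iota (hortho : ∀ i j : Fin d, adjoint (S i) ∘L S j = if i = j then 1 else 0)
    (hsum : ∑ k : Fin d, S k ∘L adjoint (S k) = 1)
    (hiso : adjoint ι ∘L ι = 1)
    (hinv : ∀ k, (ι ∘L adjoint ι) ∘L adjoint (S k) ∘L (ι ∘L adjoint ι)
      = adjoint (S k) ∘L (ι ∘L adjoint ι))
    (hcomp : ∀ k, adjoint ι ∘L S k ∘L ι = v k)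
    {x : K →L[ℂ] K} (hx : psi v x = x) (ξ : K) :
    CauchySeq (fun n => Xseq ι S x n (ι ξ)) := by
  set u := fun n => Xseq ι S x n (ι ξ) with hu
  set c := fun n => (‖u n‖ : ℝ)^2 with hc
  have hkey : ∀ {n m : ℕ}, n ≤ m → ‖u m - u n‖^2 = c m - c n := by
    intro n m hnm
    exact norm_sub_sq_Xseq hortho hiso hinv hcomp hx ξ hnm
  have hmono : Monotone c := by
    intro n m hnm
    have := hkey hnm
    nlinarith [sq_nonneg ‖u m - u n‖]
  have hbdd : BddAbove (Set.range c) := by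
    refine ⟨(‖x‖ * ‖ι ξ‖)^2, ?_⟩
    rintro - ⟨n, rfl⟩
    simp only [hc]
    have hb : ‖u n‖ ≤ ‖x‖ * ‖ι ξ‖ := Xseq_norm_le hortho hsum hiso x n (ι ξ)
    have h0 : (0:ℝ) ≤ ‖u n‖ := norm_nonneg _
    nlinarith
  have hconv : CauchySeq c := (tendsto_atTop_ciSup hmono hbdd).cauchySeq
  rw [Metric.cauchySeq_iff] at hconv ⊢
  intro ε hε
  obtain ⟨N, hN⟩ := hconv (ε^2) (by positivity)
  refine ⟨N, fun m hm n hn => ?_⟩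
  have hdistsq : dist (u m) (u n)^2 = |c m - c n| := by
    rcases le_total n m with hnm | hmn
    · rw [dist_eq_norm, hkey hnm, abs_of_nonneg]
      have := hmono hnm; linarith
    · rw [dist_comm, dist_eq_norm, hkey hmn, abs_sub_comm,
        abs_of_nonneg (by have := hmono hmn; linarith)]
  have hlt : dist (u m) (u n)^2 < ε^2 := by
    rw [hdistsq, ← Real.dist_eq]
    exact hN m hm n hn
  exact lt_of_pow_lt_pow_left₀ 2 (le_of_lt hε) hlt

lemma Xseq_cword (hortho : ∀ i j : Fin d, adjoint (S i) ∘L S j = if i = j then 1 else 0)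
    (x : K →L[ℂ] K) (n : ℕ) :
    ∀ (I : List (Fin d)) (h : H),
      Xseq ι S x (n + I.length) (cword S I h) = cword S I (Xseq ι S x n h) := by
  intro I
  induction I with
  | nil => intro h; simp [cword_nil]
  | cons i I ih =>
    intro h
    have hlen : n + (i :: I).length = (n + I.length) + 1 := by simp [List.length_cons]; ring
    rw [cword_cons, hlen, Xseq_succ, Phi_S hortho, ih, cword_cons]

lemma exists_tendsto_gen (hortho : ∀ i j : Fin d, adjoint (S i) ∘L S j = if i = j then 1 else 0)
    (hsum : ∑ k : Fin d, S k ∘L adjoint (S k) = 1)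
    (hiso : adjoint ι ∘L ι = 1)
    (hinv : ∀ k, (ι ∘L adjoint ι) ∘L adjoint (S k) ∘L (ι ∘L adjoint ι)
      = adjoint (S k) ∘L (ι ∘L adjoint ι))
    (hcomp : ∀ k, adjoint ι ∘L S k ∘L ι = v k)
    {x : K →L[ℂ] K} (hx : psi v x = x) (I : List (Fin d)) (ξ : K) :
    ∃ L, Tendsto (fun n => Xseq ι S x n (cword S I (ι ξ))) atTop (𝓝 L) := by
  obtain ⟨L0, hL0⟩ := cauchySeq_tendsto_of_complete
    (cauchy_Xseq_iota hortho hsum hiso hinv hcomp hx ξ)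
  refine ⟨cword S I L0, ?_⟩
  rw [← Filter.tendsto_add_atTop_iff_nat I.length]
  have heq : (fun n => Xseq ι S x (n + I.length) (cword S I (ι ξ)))
      = fun n => cword S I (Xseq ι S x n (ι ξ)) :=
    funext (fun n => Xseq_cword hortho x n I (ι ξ))
  rw [heq]
  exact ((cword S I).continuous.tendsto L0).comp hL0

/-! ### The lift -/

def genSet (ι : K →L[ℂ] H) (S : Fin d → H →L[ℂ] H) : Set H :=
  {w : H | ∃ (I : List (Fin d)) (ξ : K), w = cword S I (ι ξ)}

lemma exists_tendsto_span (hortho : ∀ i j : Fin d, adjoint (S i) ∘L S j = if i = j then 1 else 0)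
    (hsum : ∑ k : Fin d, S k ∘L adjoint (S k) = 1)
    (hiso : adjoint ι ∘L ι = 1)
    (hinv : ∀ k, (ι ∘L adjoint ι) ∘L adjoint (S k) ∘L (ι ∘L adjoint ι)
      = adjoint (S k) ∘L (ι ∘L adjoint ι))
    (hcomp : ∀ k, adjoint ι ∘L S k ∘L ι = v k)
    {x : K →L[ℂ] K} (hx : psi v x = x) (h : H)
    (hh : h ∈ Submodule.span ℂ (genSet ι S)) :
    ∃ L, Tendsto (fun n => Xseq ι S x n h) atTop (𝓝 L) := by
  induction hh using Submodule.span_induction with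
  | mem w hw =>
    obtain ⟨I, ξ, rfl⟩ := hw
    exact exists_tendsto_gen hortho hsum hiso hinv hcomp hx I ξ
  | zero => exact ⟨0, by simpa using (tendsto_const_nhds : Tendsto (fun _ : ℕ => (0:H)) atTop _)⟩
  | add a b _ _ iha ihb =>
    obtain ⟨La, hLa⟩ := iha
    obtain ⟨Lb, hLb⟩ := ihb
    exact ⟨La + Lb, by simpa only [map_add] using hLa.add hLb⟩
  | smul a w _ ihw =>
    obtain ⟨L, hL⟩ := ihw
    exact ⟨a • L, by simpa only [map_smul] using hL.const_smul a⟩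

lemma cauchy_Xseq_all (hortho : ∀ i j : Fin d, adjoint (S i) ∘L S j = if i = j then 1 else 0)
    (hsum : ∑ k : Fin d, S k ∘L adjoint (S k) = 1)
    (hiso : adjoint ι ∘L ι = 1)
    (hinv : ∀ k, (ι ∘L adjoint ι) ∘L adjoint (S k) ∘L (ι ∘L adjoint ι)
      = adjoint (S k) ∘L (ι ∘L adjoint ι))
    (hcomp : ∀ k, adjoint ι ∘L S k ∘L ι = v k)
    {x : K →L[ℂ] K} (hx : psi v x = x)
    (hdense : Dense ((Submodule.span ℂ (genSet ι S) : Submodule ℂ H) : Set H)) (h : H) :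
    CauchySeq (fun n => Xseq ι S x n h) := by
  rw [Metric.cauchySeq_iff]
  intro ε hε
  have hxpos : (0:ℝ) < ‖x‖ + 1 := by positivity
  have hδ : (0:ℝ) < ε / 3 / (‖x‖ + 1) := by positivity
  obtain ⟨h', hh'mem, hh'⟩ := hdense.exists_dist_lt h hδ
  obtain ⟨L, hL⟩ := exists_tendsto_span hortho hsum hiso hinv hcomp hx h' hh'mem
  have hcs := hL.cauchySeq
  rw [Metric.cauchySeq_iff] at hcs
  obtain ⟨N, hN⟩ := hcs (ε/3) (by positivity)
  refine ⟨N, fun m hm n hn => ?_⟩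
  have hbound : ∀ p : ℕ, dist (Xseq ι S x p h) (Xseq ι S x p h') ≤ ε/3 := by
    intro p
    rw [dist_eq_norm, ← map_sub]
    calc ‖Xseq ι S x p (h - h')‖ ≤ ‖x‖ * ‖h - h'‖ :=
          Xseq_norm_le hortho hsum hiso x p (h - h')
      _ ≤ (‖x‖+1) * (ε/3/(‖x‖+1)) := by
          have h1 : ‖h - h'‖ ≤ ε/3/(‖x‖+1) := by
            rw [← dist_eq_norm]; exact le_of_lt hh'
          nlinarith [norm_nonneg x, norm_nonneg (h - h')]
      _ = ε/3 := by field_simp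
  have h2 : dist (Xseq ι S x n h') (Xseq ι S x n h) ≤ ε/3 := by
    rw [dist_comm]; exact hbound n
  have h3 := hN m hm n hn
  calc dist (Xseq ι S x m h) (Xseq ι S x n h)
      ≤ dist (Xseq ι S x m h) (Xseq ι S x m h')
        + dist (Xseq ι S x m h') (Xseq ι S x n h')
        + dist (Xseq ι S x n h') (Xseq ι S x n h) := dist_triangle4 _ _ _ _
    _ < ε := by
        have h1 := hbound m
        linarith

lemma exists_lift (hortho : ∀ i j : Fin d, adjoint (S i) ∘L S j = if i = j then 1 else 0)
    (hsum : ∑ k : Fin d, S k ∘L adjoint (S k) = 1)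
    (hiso : adjoint ι ∘L ι = 1)
    (hinv : ∀ k, (ι ∘L adjoint ι) ∘L adjoint (S k) ∘L (ι ∘L adjoint ι)
      = adjoint (S k) ∘L (ι ∘L adjoint ι))
    (hcomp : ∀ k, adjoint ι ∘L S k ∘L ι = v k)
    {x : K →L[ℂ] K} (hx : psi v x = x)
    (hdense : Dense ((Submodule.span ℂ (genSet ι S) : Submodule ℂ H) : Set H)) :
    ∃ X : H →L[ℂ] H, ∀ h : H, Tendsto (fun n => Xseq ι S x n h) atTop (𝓝 (X h)) := by
  have hconv : ∀ h : H, ∃ L, Tendsto (fun n => Xseq ι S x n h) atTop (𝓝 L) :=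
    fun h => cauchySeq_tendsto_of_complete
      (cauchy_Xseq_all hortho hsum hiso hinv hcomp hx hdense h)
  choose F hF using hconv
  have hadd : ∀ a b : H, F (a + b) = F a + F b := by
    intro a b
    have h2 : Tendsto (fun n => Xseq ι S x n (a + b)) atTop (𝓝 (F a + F b)) := by
      simpa only [map_add] using (hF a).add (hF b)
    exact tendsto_nhds_unique (hF (a + b)) h2
  have hsmul : ∀ (c : ℂ) (a : H), F (c • a) = c • F a := by
    intro c a
    have h2 : Tendsto (fun n => Xseq ι S x n (c • a)) atTop (𝓝 (c • F a)) := by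
      simpa only [map_smul] using (hF a).const_smul c
    exact tendsto_nhds_unique (hF (c • a)) h2
  have hnorm : ∀ h : H, ‖F h‖ ≤ ‖x‖ * ‖h‖ := by
    intro h
    exact le_of_tendsto (hF h).norm
      (Filter.Eventually.of_forall (fun n => Xseq_norm_le hortho hsum hiso x n h))
  exact ⟨LinearMap.mkContinuous
    { toFun := F
      map_add' := hadd
      map_smul' := by intro c a; simpa using hsmul c a } ‖x‖ hnorm, hF⟩

lemma lift_spec (hortho : ∀ i j : Fin d, adjoint (S i) ∘L S j = if i = j then 1 else 0)
    (hsum : ∑ k : Fin d, S k ∘L adjoint (S k) = 1)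
    (hiso : adjoint ι ∘L ι = 1)
    (hinv : ∀ k, (ι ∘L adjoint ι) ∘L adjoint (S k) ∘L (ι ∘L adjoint ι)
      = adjoint (S k) ∘L (ι ∘L adjoint ι))
    (hcomp : ∀ k, adjoint ι ∘L S k ∘L ι = v k)
    {x : K →L[ℂ] K} (hx : psi v x = x)
    (hdense : Dense ((Submodule.span ℂ (genSet ι S) : Submodule ℂ H) : Set H)) :
    ∃ X : H →L[ℂ] H,
      (∀ k, X ∘L S k = S k ∘L X) ∧ (∀ k, X ∘L adjoint (S k) = adjoint (S k) ∘L X) ∧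
      (∀ ξ, adjoint ι (X (ι ξ)) = x ξ) ∧
      (∀ h : H, Tendsto (fun n => Xseq ι S x n h) atTop (𝓝 (X h))) := by
  obtain ⟨X, hX⟩ := exists_lift hortho hsum hiso hinv hcomp hx hdense
  refine ⟨X, fun k => ?_, fun k => ?_, fun ξ => ?_, hX⟩
  · ext h
    simp only [ContinuousLinearMap.comp_apply]
    have h1 : Tendsto (fun n => Xseq ι S x (n+1) (S k h)) atTop (𝓝 (X (S k h))) :=
      (Filter.tendsto_add_atTop_iff_nat 1).mpr (hX (S k h))
    have h2 : (fun n => Xseq ι S x (n+1) (S k h)) = fun n => S k (Xseq ι S x n h) := by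
      funext n; rw [Xseq_succ]; exact Phi_S hortho _ k h
    rw [h2] at h1
    have h3 : Tendsto (fun n => S k (Xseq ι S x n h)) atTop (𝓝 (S k (X h))) :=
      ((S k).continuous.tendsto (X h)).comp (hX h)
    exact tendsto_nhds_unique h1 h3
  · ext h
    simp only [ContinuousLinearMap.comp_apply]
    have h1 : Tendsto (fun n => adjoint (S k) (Xseq ι S x (n+1) h)) atTop
        (𝓝 (adjoint (S k) (X h))) :=
      ((adjoint (S k)).continuous.tendsto (X h)).comp
        ((Filter.tendsto_add_atTop_iff_nat 1).mpr (hX h))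
    have h2 : (fun n => adjoint (S k) (Xseq ι S x (n+1) h))
        = fun n => Xseq ι S x n (adjoint (S k) h) := by
      funext n; rw [Xseq_succ]; exact Sadj_Phi hortho _ k h
    rw [h2] at h1
    exact tendsto_nhds_unique (hX _) h1
  · have h1 : Tendsto (fun n => adjoint ι (Xseq ι S x n (ι ξ))) atTop
        (𝓝 (adjoint ι (X (ι ξ)))) :=
      ((adjoint ι).continuous.tendsto (X (ι ξ))).comp (hX _)
    have h2 : (fun n => adjoint ι (Xseq ι S x n (ι ξ))) = fun _ => x ξ :=
      funext fun n => compress_Xseq hiso hinv hcomp hx n ξ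
    rw [h2] at h1
    exact tendsto_nhds_unique h1 tendsto_const_nhds

/-! ### Word lemmas and density arguments -/

lemma adjoint_one' {E : Type*} [NormedAddCommGroup E] [InnerProductSpace ℂ E]
    [CompleteSpace E] : adjoint (1 : E →L[ℂ] E) = 1 := by
  rw [ContinuousLinearMap.one_def]; exact ContinuousLinearMap.adjoint_id

lemma cword_comp {E : Type*} [NormedAddCommGroup E] [InnerProductSpace ℂ E]
    [CompleteSpace E] (W : Fin d → E →L[ℂ] E) (i : Fin d) (I : List (Fin d)) :
    cword W (i :: I) = W i ∘L cword W I := by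
  ext h; rw [cword_cons]; rfl

lemma adjoint_cword_cons {E : Type*} [NormedAddCommGroup E] [InnerProductSpace ℂ E]
    [CompleteSpace E] (W : Fin d → E →L[ℂ] E) (i : Fin d) (I : List (Fin d)) :
    adjoint (cword W (i :: I)) = adjoint (cword W I) ∘L adjoint (W i) := by
  rw [cword_comp, ContinuousLinearMap.adjoint_comp]

lemma adjoint_cword_iota (hiso : adjoint ι ∘L ι = 1)
    (hinv : ∀ k, (ι ∘L adjoint ι) ∘L adjoint (S k) ∘L (ι ∘L adjoint ι)
      = adjoint (S k) ∘L (ι ∘L adjoint ι))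
    (hcomp : ∀ k, adjoint ι ∘L S k ∘L ι = v k) :
    ∀ (I : List (Fin d)) (ξ : K),
      adjoint (cword S I) (ι ξ) = ι (adjoint (cword v I) ξ) := by
  intro I
  induction I with
  | nil =>
    intro ξ
    show adjoint (cword S []) (ι ξ) = ι (adjoint (cword v []) ξ)
    have h1 : cword S [] = (1 : H →L[ℂ] H) := rfl
    have h2 : cword v [] = (1 : K →L[ℂ] K) := rfl
    rw [h1, h2, adjoint_one', adjoint_one']
    rfl
  | cons i I ih =>
    intro ξ
    rw [adjoint_cword_cons, adjoint_cword_cons]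
    simp only [ContinuousLinearMap.comp_apply]
    rw [Sadj_iota hiso hinv hcomp, ih]

lemma iota_adj_cword (hiso : adjoint ι ∘L ι = 1)
    (hinv : ∀ k, (ι ∘L adjoint ι) ∘L adjoint (S k) ∘L (ι ∘L adjoint ι)
      = adjoint (S k) ∘L (ι ∘L adjoint ι))
    (hcomp : ∀ k, adjoint ι ∘L S k ∘L ι = v k) :
    ∀ (I : List (Fin d)) (h : H),
      adjoint ι (cword S I h) = cword v I (adjoint ι h) := by
  intro I
  induction I with
  | nil => intro h; rfl
  | cons i I ih =>
    intro h
    rw [cword_cons, cword_cons, iota_adj_S hiso hinv hcomp, ih]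

lemma comm_cword {E : Type*} [NormedAddCommGroup E] [InnerProductSpace ℂ E]
    [CompleteSpace E] {W : Fin d → E →L[ℂ] E} {Z : E →L[ℂ] E} (hZ : ∀ k, Z ∘L W k = W k ∘L Z) :
    ∀ (I : List (Fin d)) (h : E), Z (cword W I h) = cword W I (Z h) := by
  intro I
  induction I with
  | nil => intro h; rfl
  | cons i I ih =>
    intro h
    rw [cword_cons, cword_cons, ← ih]
    have := congrArg (fun T : E →L[ℂ] E => T (cword W I h)) (hZ i)
    simpa using this

lemma comm_adjoint_cword {E : Type*} [NormedAddCommGroup E] [InnerProductSpace ℂ E]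
    [CompleteSpace E] {W : Fin d → E →L[ℂ] E} {Z : E →L[ℂ] E}
    (hZ : ∀ k, Z ∘L adjoint (W k) = adjoint (W k) ∘L Z) :
    ∀ (I : List (Fin d)) (h : E), Z (adjoint (cword W I) h) = adjoint (cword W I) (Z h) := by
  intro I
  induction I with
  | nil =>
    intro h
    have h1 : cword W [] = (1 : E →L[ℂ] E) := rfl
    rw [h1, adjoint_one']
    rfl
  | cons i I ih =>
    intro h
    rw [adjoint_cword_cons]
    simp only [ContinuousLinearMap.comp_apply]
    rw [ih]
    congr 1
    have := congrArg (fun T : E →L[ℂ] E => T h) (hZ i)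
    simpa using this

/-- An operator whose matrix elements against the total set all vanish is zero. -/
lemma eq_zero_of_inner_gen
    (hdense : Dense ((Submodule.span ℂ (genSet ι S) : Submodule ℂ H) : Set H))
    (W : H →L[ℂ] H)
    (hW : ∀ (I J : List (Fin d)) (ξ η : K),
      ⟪cword S I (ι ξ), W (cword S J (ι η))⟫ = 0) :
    W = 0 := by
  have hgen : ∀ g ∈ genSet ι S, W g = 0 := by
    rintro g ⟨J, η, rfl⟩
    have hfun : (innerSL ℂ (W (cword S J (ι η)))) = 0 := by
      apply ContinuousLinearMap.ext_on hdense
      rintro w ⟨I, ξ, rfl⟩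
      rw [innerSL_apply_apply, ContinuousLinearMap.zero_apply,
        ← inner_conj_symm, hW I J ξ η, map_zero]
    have := congrArg (fun T : H →L[ℂ] ℂ => T (W (cword S J (ι η)))) hfun
    simp only [innerSL_apply_apply, ContinuousLinearMap.zero_apply] at this
    exact inner_self_eq_zero.mp this
  apply ContinuousLinearMap.ext_on hdense
  rintro g ⟨J, η, rfl⟩
  rw [ContinuousLinearMap.zero_apply]
  exact hgen _ ⟨J, η, rfl⟩

/-- Injectivity of compression on the commutant of the Cuntz family. -/
lemma inner_gen_eq_zero
    (hortho : ∀ i j : Fin d, adjoint (S i) ∘L S j = if i = j then 1 else 0)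
    (hiso : adjoint ι ∘L ι = 1)
    (hinv : ∀ k, (ι ∘L adjoint ι) ∘L adjoint (S k) ∘L (ι ∘L adjoint ι)
      = adjoint (S k) ∘L (ι ∘L adjoint ι))
    (hcomp : ∀ k, adjoint ι ∘L S k ∘L ι = v k)
    {Z : H →L[ℂ] H}
    (hZ1 : ∀ k, Z ∘L S k = S k ∘L Z) (hZ2 : ∀ k, Z ∘L adjoint (S k) = adjoint (S k) ∘L Z)
    (hZ0 : ∀ ξ : K, adjoint ι (Z (ι ξ)) = 0) :
    ∀ (I J : List (Fin d)) (ξ η : K), ⟪cword S I (ι ξ), Z (cword S J (ι η))⟫ = 0 := by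
  intro I
  induction I with
  | nil =>
    intro J ξ η
    rw [cword_nil, comm_cword hZ1 J, ← ContinuousLinearMap.adjoint_inner_left,
      adjoint_cword_iota hiso hinv hcomp, ← ContinuousLinearMap.adjoint_inner_right,
      hZ0 η]
    simp
  | cons i I ih =>
    intro J ξ η
    rw [cword_cons, ← ContinuousLinearMap.adjoint_inner_right]
    have hswap : adjoint (S i) (Z (cword S J (ι η))) = Z (adjoint (S i) (cword S J (ι η))) := by
      have := congrArg (fun T : H →L[ℂ] H => T (cword S J (ι η))) (hZ2 i)
      simpa using this.symm
    rw [hswap]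
    cases J with
    | nil =>
      rw [cword_nil, Sadj_iota hiso hinv hcomp]
      have := ih [] ξ (adjoint (v i) η)
      rwa [cword_nil] at this
    | cons j J' =>
      rw [cword_cons, Sadj_S hortho]
      by_cases hij : i = j
      · subst hij
        simp only [if_pos rfl]
        exact ih J' ξ η
      · simp [hij]

end Pop

open Pop in
/-- In a minimal Popescu dilation `(H, P, S)` of `(K, v)` (`P = ι ∘ ι*`):
`{vₖ, vₖ*}' ⊆ B_τ(K) = {x : ∑ₖ vₖ x vₖ* = x}`, and equality holds iff `P` belongs to the
von Neumann algebra `{Sₖ, Sₖ*}''` generated by the Cuntz family. -/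
theorem commutant_eq_fixedPoints_iff_proj_mem {d : ℕ} (hd : 2 ≤ d)
    {K H : Type*} [NormedAddCommGroup K] [InnerProductSpace ℂ K] [CompleteSpace K]
    [NormedAddCommGroup H] [InnerProductSpace ℂ H] [CompleteSpace H]
    (v : Fin d → K →L[ℂ] K) (hv : IsPopescuSystem v)
    (ι : K →L[ℂ] H) (S : Fin d → H →L[ℂ] H) (hdil : IsMinimalDilation v ι S) :
    Set.centralizer (Set.range v ∪ Set.range (fun k => adjoint (v k)))
        ⊆ {x : K →L[ℂ] K | (∑ k : Fin d, v k ∘L x ∘L adjoint (v k)) = x} ∧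
    (Set.centralizer (Set.range v ∪ Set.range (fun k => adjoint (v k)))
          = {x : K →L[ℂ] K | (∑ k : Fin d, v k ∘L x ∘L adjoint (v k)) = x} ↔
      (ι ∘L adjoint ι) ∈ Set.centralizer (Set.centralizer
          (Set.range S ∪ Set.range (fun k => adjoint (S k))))) := by
  classical
  obtain ⟨⟨hortho, hsum⟩, hiso, hinv, hcomp, hdense⟩ := hdil
  have hdense' : Dense ((Submodule.span ℂ (genSet ι S) : Submodule ℂ H) : Set H) := hdense
  have hcompp : ∀ k (ξ : K), adjoint ι (S k (ι ξ)) = v k ξ := by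
    intro k ξ
    have := congrArg (fun T : K →L[ℂ] K => T ξ) (hcomp k)
    simpa using this
  -- Part 1: the commutant is contained in the fixed-point set.
  have hsub : Set.centralizer (Set.range v ∪ Set.range (fun k => adjoint (v k)))
      ⊆ {x : K →L[ℂ] K | (∑ k : Fin d, v k ∘L x ∘L adjoint (v k)) = x} := by
    intro x hx
    simp only [Set.mem_setOf_eq]
    have hxv2p : ∀ k (ξ : K), x (adjoint (v k) ξ) = adjoint (v k) (x ξ) := by
      intro k ξ
      have := congrArg (fun T : K →L[ℂ] K => T ξ)
        (Set.mem_centralizer_iff.mp hx _ (Set.mem_union_right _ ⟨k, rfl⟩))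
      simpa [ContinuousLinearMap.mul_apply] using this.symm
    apply ContinuousLinearMap.ext
    intro ξ
    simp only [ContinuousLinearMap.sum_apply, ContinuousLinearMap.comp_apply]
    have hterm : ∀ k : Fin d, v k (x (adjoint (v k) ξ)) = v k (adjoint (v k) (x ξ)) :=
      fun k => by rw [hxv2p k ξ]
    rw [Finset.sum_congr rfl (fun k _ => hterm k)]
    have := congrArg (fun T : K →L[ℂ] K => T (x ξ)) hv
    simpa [ContinuousLinearMap.sum_apply] using this
  refine ⟨hsub, ?_, ?_⟩
  · -- equality implies the projection lies in the double commutant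
    intro heq
    refine Set.mem_centralizer_iff.mpr ?_
    intro Y hY
    have hY1p : ∀ k (h : H), Y (S k h) = S k (Y h) := by
      intro k h
      have := congrArg (fun T : H →L[ℂ] H => T h)
        (Set.mem_centralizer_iff.mp hY _ (Set.mem_union_left _ ⟨k, rfl⟩))
      simpa [ContinuousLinearMap.mul_apply] using this.symm
    have hY2p : ∀ k (h : H), Y (adjoint (S k) h) = adjoint (S k) (Y h) := by
      intro k h
      have := congrArg (fun T : H →L[ℂ] H => T h)
        (Set.mem_centralizer_iff.mp hY _ (Set.mem_union_right _ ⟨k, rfl⟩))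
      simpa [ContinuousLinearMap.mul_apply] using this.symm
    have hY1 : ∀ k, Y ∘L S k = S k ∘L Y := by
      intro k; ext h; simpa using hY1p k h
    have hY2 : ∀ k, Y ∘L adjoint (S k) = adjoint (S k) ∘L Y := by
      intro k; ext h; simpa using hY2p k h
    set x : K →L[ℂ] K := adjoint ι ∘L (Y ∘L ι) with hxdef
    have hxapp : ∀ ξ : K, x ξ = adjoint ι (Y (ι ξ)) := fun ξ => rfl
    -- x is a fixed point of the transfer operator
    have hfix : (∑ k : Fin d, v k ∘L x ∘L adjoint (v k)) = x := by
      apply ContinuousLinearMap.ext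
      intro ξ
      simp only [ContinuousLinearMap.sum_apply, ContinuousLinearMap.comp_apply]
      have hterm : ∀ k : Fin d, v k (x (adjoint (v k) ξ))
          = adjoint ι (S k (adjoint (S k) (Y (ι ξ)))) := by
        intro k
        rw [hxapp, ← Sadj_iota hiso hinv hcomp, hY2p, ← iota_adj_S hiso hinv hcomp]
      rw [Finset.sum_congr rfl (fun k _ => hterm k), ← map_sum, hxapp]
      congr 1
      have := congrArg (fun T : H →L[ℂ] H => T (Y (ι ξ))) hsum
      simpa [ContinuousLinearMap.sum_apply] using this
    have hxc : x ∈ Set.centralizer (Set.range v ∪ Set.range (fun k => adjoint (v k))) := by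
      rw [heq]; exact hfix
    have hxv1 : ∀ k, x ∘L v k = v k ∘L x := by
      intro k
      have h1 := Set.mem_centralizer_iff.mp hxc _ (Set.mem_union_left _ ⟨k, rfl⟩)
      ext ξ
      have h2 := congrArg (fun T : K →L[ℂ] K => T ξ) h1
      simpa [ContinuousLinearMap.mul_apply] using h2.symm
    have hxv2 : ∀ k, x ∘L adjoint (v k) = adjoint (v k) ∘L x := by
      intro k
      have h1 := Set.mem_centralizer_iff.mp hxc _ (Set.mem_union_right _ ⟨k, rfl⟩)
      ext ξ
      have h2 := congrArg (fun T : K →L[ℂ] K => T ξ) h1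
      simpa [ContinuousLinearMap.mul_apply] using h2.symm
    -- Y commutes with the projection: matrix elements agree
    have hW : Y ∘L (ι ∘L adjoint ι) - (ι ∘L adjoint ι) ∘L Y = 0 := by
      apply eq_zero_of_inner_gen hdense'
      intro I J ξ η
      have hA : ⟪cword S I (ι ξ), Y ((ι ∘L adjoint ι) (cword S J (ι η)))⟫
          = ⟪ξ, x (adjoint (cword v I) (cword v J η))⟫ := by
        have h1 : (ι ∘L adjoint ι) (cword S J (ι η)) = ι (cword v J η) := by
          simp only [ContinuousLinearMap.comp_apply]
          rw [iota_adj_cword hiso hinv hcomp, iso_apply hiso]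
        rw [h1, ← ContinuousLinearMap.adjoint_inner_right,
          ← comm_adjoint_cword hY2 I, adjoint_cword_iota hiso hinv hcomp,
          ← ContinuousLinearMap.adjoint_inner_right]
        rw [hxapp]
      have hB : ⟪cword S I (ι ξ), (ι ∘L adjoint ι) (Y (cword S J (ι η)))⟫
          = ⟪ξ, adjoint (cword v I) (cword v J (x η))⟫ := by
        have h1 : Y (cword S J (ι η)) = cword S J (Y (ι η)) := comm_cword hY1 J _
        have h2 : adjoint ι (cword S J (Y (ι η))) = cword v J (x η) := by
          rw [iota_adj_cword hiso hinv hcomp, hxapp]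
        simp only [ContinuousLinearMap.comp_apply]
        rw [h1, h2, ← ContinuousLinearMap.adjoint_inner_right,
          adjoint_cword_iota hiso hinv hcomp, inner_iso hiso]
      have hcommx : x (adjoint (cword v I) (cword v J η))
          = adjoint (cword v I) (cword v J (x η)) := by
        rw [comm_adjoint_cword hxv2 I, comm_cword hxv1 J]
      simp only [ContinuousLinearMap.sub_apply, ContinuousLinearMap.comp_apply,
        inner_sub_right]
      have hA' := hA
      have hB' := hB
      simp only [ContinuousLinearMap.comp_apply] at hA' hB'
      rw [hA', hB', hcommx, sub_self]
    have hcomm : Y ∘L (ι ∘L adjoint ι) = (ι ∘L adjoint ι) ∘L Y := sub_eq_zero.mp hW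
    ext h
    have := congrArg (fun T : H →L[ℂ] H => T h) hcomm
    simpa [ContinuousLinearMap.mul_apply] using this
  · -- the projection in the double commutant implies equality
    intro hP
    apply Set.Subset.antisymm hsub
    intro x hxfix
    have hx : psi v x = x := hxfix
    obtain ⟨X, hX1, hX2, hX0, -⟩ := lift_spec hortho hsum hiso hinv hcomp hx hdense'
    have hX1p : ∀ k (h : H), X (S k h) = S k (X h) := fun k h => by
      have := congrArg (fun T : H →L[ℂ] H => T h) (hX1 k); simpa using this
    have hX2p : ∀ k (h : H), X (adjoint (S k) h) = adjoint (S k) (X h) := fun k h => by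
      have := congrArg (fun T : H →L[ℂ] H => T h) (hX2 k); simpa using this
    have hXc : X ∈ Set.centralizer (Set.range S ∪ Set.range (fun k => adjoint (S k))) := by
      refine Set.mem_centralizer_iff.mpr ?_
      rintro m (⟨k, rfl⟩ | ⟨k, rfl⟩)
      · ext h
        simp only [ContinuousLinearMap.mul_apply]
        exact (hX1p k h).symm
      · ext h
        simp only [ContinuousLinearMap.mul_apply]
        exact (hX2p k h).symm
    have hPX := Set.mem_centralizer_iff.mp hP X hXc
    have hPXp : ∀ h : H, X (ι (adjoint ι h)) = ι (adjoint ι (X h)) := by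
      intro h
      have := congrArg (fun T : H →L[ℂ] H => T h) hPX
      simpa [ContinuousLinearMap.mul_apply] using this
    have hXι : ∀ ξ : K, X (ι ξ) = ι (x ξ) := by
      intro ξ
      have h1 := hPXp (ι ξ)
      rw [iso_apply hiso, hX0] at h1
      exact h1
    refine Set.mem_centralizer_iff.mpr ?_
    rintro m (⟨k, rfl⟩ | ⟨k, rfl⟩)
    · ext ξ
      simp only [ContinuousLinearMap.mul_apply]
      have hchain : x (v k ξ) = v k (x ξ) := by
        calc x (v k ξ) = adjoint ι (X (ι (v k ξ))) := (hX0 _).symm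
          _ = adjoint ι (X (ι (adjoint ι (S k (ι ξ))))) := by rw [hcompp k ξ]
          _ = adjoint ι (ι (adjoint ι (X (S k (ι ξ))))) := by rw [hPXp]
          _ = adjoint ι (X (S k (ι ξ))) := by rw [iso_apply hiso]
          _ = adjoint ι (S k (X (ι ξ))) := by rw [hX1p]
          _ = v k (adjoint ι (X (ι ξ))) := iota_adj_S hiso hinv hcomp k _
          _ = v k (x ξ) := by rw [hX0]
      exact hchain.symm
    · ext ξ
      simp only [ContinuousLinearMap.mul_apply]
      have hchain : x (adjoint (v k) ξ) = adjoint (v k) (x ξ) := by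
        calc x (adjoint (v k) ξ) = adjoint ι (X (ι (adjoint (v k) ξ))) := (hX0 _).symm
          _ = adjoint ι (X (adjoint (S k) (ι ξ))) := by
              rw [← Sadj_iota hiso hinv hcomp]
          _ = adjoint ι (adjoint (S k) (X (ι ξ))) := by rw [hX2p]
          _ = adjoint ι (adjoint (S k) (ι (x ξ))) := by rw [hXι]
          _ = adjoint ι (ι (adjoint (v k) (x ξ))) := by
              rw [Sadj_iota hiso hinv hcomp]
          _ = adjoint (v k) (x ξ) := iso_apply hiso _
      exact hchain.symm
end
end

section
/- Fix d ≥ 2 and let 𝓘 be the set of finite multi-indices over {1,…,d}, including the empty multi-index ∅. Suppose C : 𝓘 × 𝓘 → ℂ satisfies: (i) C(∅,∅) = 1; (ii) for every finitely supported function λ : 𝓘 → ℂ, Σ_{I,J ∈ 𝓘} conj(λ(I)) C(I,J) λ(J) ≥ 0; (iii) Σ_{i=1}^d C(Ii, Ji) = C(I,J) for all I, J ∈ 𝓘, where Ii denotes the multi-index I with the letter i appended. Then there exist a complex Hilbert space K, a unit vector Ω ∈ K, and a Popescu system (v_1,…,v_d) on K such that the vectors {v_I* Ω : I ∈ 𝓘}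 are total in K and C(I,J) = ⟨v_I* Ω, v_J* Ω⟩ for all I, J ∈ 𝓘; moreover (K, Ω, (v_k)) is unique up to a unitary equivalence carrying Ω to Ω and each v_k to v_k. -/
open ContinuousLinearMap Filter
open scoped ComplexInnerProductSpace ComplexOrder

noncomputable section

namespace PopescuAux

open Finsupp

abbrev V (d : ℕ) : Type := List (Fin d) →₀ ℂ

variable {d : ℕ} (C : List (Fin d) → List (Fin d) → ℂ)

/-- The sesquilinear form associated to the kernel `C`. -/
def B (f g : V d) : ℂ :=
  f.sum fun I a => g.sum fun J b => (starRingEnd ℂ) a * C I J * b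

lemma B_apply (f g : V d) :
    B C f g = ∑ I ∈ f.support, ∑ J ∈ g.support,
      (starRingEnd ℂ) (f I) * C I J * g J := rfl

lemma B_single_single (I J : List (Fin d)) (a b : ℂ) :
    B C (single I a) (single J b) = (starRingEnd ℂ) a * C I J * b := by
  unfold B
  rw [Finsupp.sum_single_index, Finsupp.sum_single_index]
  · simp
  · simp [Finsupp.sum_single_index]

lemma B_add_left (f f' g : V d) : B C (f + f') g = B C f g + B C f' g := by
  unfold B
  rw [Finsupp.sum_add_index']
  · intro I; simp
  · intro I a a'
    rw [← Finsupp.sum_add]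
    congr 1 with J b
    rw [map_add]; ring

lemma B_add_right (f g g' : V d) : B C f (g + g') = B C f g + B C f g' := by
  unfold B
  rw [← Finsupp.sum_add]
  congr 1 with I a
  rw [Finsupp.sum_add_index']
  · intro J; simp
  · intro J b b'; ring

lemma B_smul_left (c : ℂ) (f g : V d) :
    B C (c • f) g = (starRingEnd ℂ) c * B C f g := by
  unfold B
  rw [Finsupp.sum_smul_index', Finsupp.mul_sum]
  · congr 1 with I a
    rw [Finsupp.mul_sum]
    congr 1 with J b
    rw [smul_eq_mul, map_mul]; ring
  · intro I; simp

lemma B_smul_right (c : ℂ) (f g : V d) : B C f (c • g) = c * B C f g := by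
  unfold B
  rw [Finsupp.mul_sum]
  congr 1 with I a
  rw [Finsupp.sum_smul_index', Finsupp.mul_sum]
  · congr 1 with J b
    rw [smul_eq_mul]; ring
  · intro J; simp

variable {C}

lemma B_self_nonneg
    (h2 : ∀ lam : List (Fin d) →₀ ℂ,
      0 ≤ ∑ I ∈ lam.support, ∑ J ∈ lam.support, (starRingEnd ℂ) (lam I) * C I J * lam J)
    (f : V d) : 0 ≤ B C f f := by
  rw [B_apply]; exact h2 f

lemma B_self_im
    (h2 : ∀ lam : List (Fin d) →₀ ℂ,
      0 ≤ ∑ I ∈ lam.support, ∑ J ∈ lam.support, (starRingEnd ℂ) (lam I) * C I J * lam J)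
    (f : V d) : (B C f f).im = 0 :=
  ((Complex.nonneg_iff.mp (B_self_nonneg h2 f)).2).symm

lemma B_self_re_nonneg
    (h2 : ∀ lam : List (Fin d) →₀ ℂ,
      0 ≤ ∑ I ∈ lam.support, ∑ J ∈ lam.support, (starRingEnd ℂ) (lam I) * C I J * lam J)
    (f : V d) : 0 ≤ (B C f f).re :=
  (Complex.nonneg_iff.mp (B_self_nonneg h2 f)).1

lemma B_conj_symm
    (h2 : ∀ lam : List (Fin d) →₀ ℂ,
      0 ≤ ∑ I ∈ lam.support, ∑ J ∈ lam.support, (starRingEnd ℂ) (lam I) * C I J * lam J)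
    (f g : V d) : (starRingEnd ℂ) (B C g f) = B C f g := by
  have h₁ := B_self_im h2 (f + g)
  have h₂ := B_self_im h2 (f + Complex.I • g)
  have hf := B_self_im h2 f
  have hg := B_self_im h2 g
  simp only [B_add_left, B_add_right, B_smul_left, B_smul_right, Complex.conj_I] at h₁ h₂
  simp only [Complex.add_im, Complex.add_re, Complex.mul_im, Complex.mul_re, Complex.neg_re,
    Complex.neg_im, Complex.I_re, Complex.I_im, hf, hg, neg_zero, zero_mul, mul_zero, one_mul,
    mul_one, zero_add, add_zero, neg_mul, neg_neg, zero_sub, sub_zero, neg_add_rev] at h₁ h₂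
  apply Complex.ext
  · simp only [Complex.conj_re]; nlinarith [h₂]
  · simp only [Complex.conj_im]; nlinarith [h₁]

variable (C)

lemma list_append_inj (k : Fin d) :
    Function.Injective fun I : List (Fin d) => I ++ [k] := fun a b h => by
  simpa using h

lemma B_shift (k : Fin d) (f g : V d) :
    B C (mapDomain (fun I => I ++ [k]) f) (mapDomain (fun I => I ++ [k]) g)
      = f.sum fun I a => g.sum fun J b =>
          (starRingEnd ℂ) a * C (I ++ [k]) (J ++ [k]) * b := by
  unfold B
  rw [Finsupp.sum_mapDomain_index_inj (list_append_inj k)]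
  refine Finsupp.sum_congr fun I _ => ?_
  rw [Finsupp.sum_mapDomain_index_inj (list_append_inj k)]

lemma B_sum_shift
    (h3 : ∀ I J : List (Fin d), ∑ i : Fin d, C (I ++ [i]) (J ++ [i]) = C I J)
    (f g : V d) :
    ∑ k : Fin d, B C (mapDomain (fun I => I ++ [k]) f) (mapDomain (fun I => I ++ [k]) g)
      = B C f g := by
  simp only [B_shift]
  unfold Finsupp.sum
  rw [Finset.sum_comm]
  refine Finset.sum_congr rfl fun I _ => ?_
  rw [Finset.sum_comm]
  refine Finset.sum_congr rfl fun J _ => ?_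
  show ∑ x : Fin d, (starRingEnd ℂ) (f I) * C (I ++ [x]) (J ++ [x]) * g J
      = (starRingEnd ℂ) (f I) * C I J * g J
  rw [← h3 I J, Finset.mul_sum, Finset.sum_mul]

end PopescuAux

section CwordLemmas

variable {d : ℕ} {H : Type*} [NormedAddCommGroup H] [InnerProductSpace ℂ H]

lemma cword_nil (S : Fin d → H →L[ℂ] H) : cword S [] = 1 := rfl

lemma cword_append_single (S : Fin d → H →L[ℂ] H) (I : List (Fin d)) (k : Fin d) :
    cword S (I ++ [k]) = cword S I ∘L S k := by
  simp only [cword, List.map_append, List.prod_append, List.map_cons, List.map_nil,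
    List.prod_cons, List.prod_nil, mul_one]
  rfl

lemma adjoint_cword_append [CompleteSpace H] (S : Fin d → H →L[ℂ] H) (I : List (Fin d))
    (k : Fin d) (x : H) :
    adjoint (cword S (I ++ [k])) x = adjoint (S k) (adjoint (cword S I) x) := by
  rw [cword_append_single, adjoint_comp]
  rfl

lemma adjoint_cword_nil [CompleteSpace H] (S : Fin d → H →L[ℂ] H) (x : H) :
    adjoint (cword S []) x = x := by
  rw [cword_nil]
  change adjoint (ContinuousLinearMap.id ℂ H) x = x
  rw [adjoint_id]
  rfl

end CwordLemmas

set_option maxHeartbeats 1000000 in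
/-- Abstract uniqueness of Popescu systems realizing a given kernel with a cyclic vector. -/
theorem popescu_unique {d : ℕ} (C : List (Fin d) → List (Fin d) → ℂ)
    {K : Type} [NormedAddCommGroup K] [InnerProductSpace ℂ K] [CompleteSpace K]
    {K' : Type} [NormedAddCommGroup K'] [InnerProductSpace ℂ K'] [CompleteSpace K']
    (Ω : K) (v : Fin d → K →L[ℂ] K) (Ω' : K') (v' : Fin d → K' →L[ℂ] K')
    (hdense : Dense ((Submodule.span ℂ
      {x : K | ∃ I : List (Fin d), x = adjoint (cword v I) Ω} : Submodule ℂ K) : Set K))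
    (hC : ∀ I J : List (Fin d), C I J = ⟪adjoint (cword v I) Ω, adjoint (cword v J) Ω⟫)
    (hdense' : Dense ((Submodule.span ℂ
      {x : K' | ∃ I : List (Fin d), x = adjoint (cword v' I) Ω'} : Submodule ℂ K') : Set K'))
    (hC' : ∀ I J : List (Fin d), C I J = ⟪adjoint (cword v' I) Ω', adjoint (cword v' J) Ω'⟫) :
    ∃ U : K ≃ₗᵢ[ℂ] K', U Ω = Ω' ∧ ∀ (k : Fin d) (ξ : K), U (v k ξ) = v' k (U ξ) := by
  classical
  set ξv : List (Fin d) → K := fun I => adjoint (cword v I) Ω with hξv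
  set ξv' : List (Fin d) → K' := fun I => adjoint (cword v' I) Ω' with hξv'
  -- the universal maps from the free module
  set u : PopescuAux.V d →ₗ[ℂ] K := Finsupp.linearCombination ℂ ξv with hu
  set u' : PopescuAux.V d →ₗ[ℂ] K' := Finsupp.linearCombination ℂ ξv' with hu'
  have hu_inner : ∀ f g : PopescuAux.V d, ⟪u f, u g⟫ = PopescuAux.B C f g := by
    intro f g
    rw [PopescuAux.B_apply, hu, Finsupp.linearCombination_apply, Finsupp.linearCombination_apply,
      Finsupp.sum, Finsupp.sum, sum_inner]
    refine Finset.sum_congr rfl fun I _ => ?_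
    rw [inner_smul_left, inner_sum, Finset.mul_sum]
    refine Finset.sum_congr rfl fun J _ => ?_
    rw [inner_smul_right, ← hC I J]
    ring
  have hu'_inner : ∀ f g : PopescuAux.V d, ⟪u' f, u' g⟫ = PopescuAux.B C f g := by
    intro f g
    rw [PopescuAux.B_apply, hu', Finsupp.linearCombination_apply, Finsupp.linearCombination_apply,
      Finsupp.sum, Finsupp.sum, sum_inner]
    refine Finset.sum_congr rfl fun I _ => ?_
    rw [inner_smul_left, inner_sum, Finset.mul_sum]
    refine Finset.sum_congr rfl fun J _ => ?_
    rw [inner_smul_right, ← hC' I J]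
    ring
  -- the pre-inner-product structure pulled back from `K`
  letI pc : PreInnerProductSpace.Core ℂ (PopescuAux.V d) :=
    { inner := fun f g => ⟪u f, u g⟫
      conj_inner_symm := fun f g => by
        show (starRingEnd ℂ) (⟪u g, u f⟫ : ℂ) = ⟪u f, u g⟫
        exact inner_conj_symm _ _
      re_inner_nonneg := fun f => by
        show 0 ≤ RCLike.re (⟪u f, u f⟫ : ℂ)
        exact inner_self_nonneg
      add_left := fun f f' g => by
        show (⟪u (f + f'), u g⟫ : ℂ) = ⟪u f, u g⟫ + ⟪u f', u g⟫
        rw [map_add, inner_add_left]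
      smul_left := fun f g c => by
        show (⟪u (c • f), u g⟫ : ℂ) = (starRingEnd ℂ) c * ⟪u f, u g⟫
        rw [map_smul, inner_smul_left] }
  letI : SeminormedAddCommGroup (PopescuAux.V d) := InnerProductSpace.Core.toSeminormedAddCommGroup (𝕜 := ℂ) (F := PopescuAux.V d)
  letI : NormedSpace ℂ (PopescuAux.V d) := InnerProductSpace.Core.toNormedSpace (𝕜 := ℂ) (F := PopescuAux.V d)
  letI : InnerProductSpace ℂ (PopescuAux.V d) :=
    { toInner := pc.toInner
      norm_sq_eq_re_inner := fun x => Real.sq_sqrt (pc.re_inner_nonneg x)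
      conj_inner_symm := pc.conj_inner_symm
      add_left := pc.add_left
      smul_left := pc.smul_left }
  have hnormV : ∀ f : PopescuAux.V d, ‖f‖ = ‖u f‖ := by
    intro f
    have h1 : ‖f‖ ^ 2 = RCLike.re (⟪u f, u f⟫ : ℂ) := norm_sq_eq_re_inner f
    have h2 : RCLike.re (⟪u f, u f⟫ : ℂ) = ‖u f‖ ^ 2 := inner_self_eq_norm_sq (u f)
    nlinarith [norm_nonneg f, norm_nonneg (u f)]
  have hnormV' : ∀ f : PopescuAux.V d, ‖f‖ = ‖u' f‖ := by
    intro f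
    have h1 : ‖f‖ ^ 2 = RCLike.re (⟪u f, u f⟫ : ℂ) := norm_sq_eq_re_inner f
    have h2 : RCLike.re (⟪u' f, u' f⟫ : ℂ) = ‖u' f‖ ^ 2 := inner_self_eq_norm_sq (u' f)
    have h3 : (⟪u f, u f⟫ : ℂ) = ⟪u' f, u' f⟫ := by rw [hu_inner, hu'_inner]
    rw [h3] at h1
    nlinarith [norm_nonneg f, norm_nonneg (u' f)]
  -- continuous versions
  set uL : PopescuAux.V d →L[ℂ] K :=
    LinearMap.mkContinuous u 1 (fun f => by rw [← hnormV, one_mul]) with huL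
  set uL' : PopescuAux.V d →L[ℂ] K' :=
    LinearMap.mkContinuous u' 1 (fun f => by rw [← hnormV', one_mul]) with huL'
  -- descend to the separation quotient
  set mkV : PopescuAux.V d →L[ℂ] SeparationQuotient (PopescuAux.V d) :=
    SeparationQuotient.mkCLM ℂ (PopescuAux.V d) with hmkV
  set outV : SeparationQuotient (PopescuAux.V d) →L[ℂ] PopescuAux.V d :=
    SeparationQuotient.outCLM ℂ (PopescuAux.V d) with houtV
  have hout_mk : ∀ f : PopescuAux.V d, ‖outV (SeparationQuotient.mk f) - f‖ = 0 := by
    intro f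
    have h2 : SeparationQuotient.mk
        (outV (SeparationQuotient.mk f)) = SeparationQuotient.mk f :=
      SeparationQuotient.mk_outCLM ℂ _
    have h3 : Inseparable (outV (SeparationQuotient.mk f)) f :=
      SeparationQuotient.mk_eq_mk.mp h2
    have h4 := Metric.inseparable_iff.mp h3
    rwa [dist_eq_norm] at h4
  set uQ : SeparationQuotient (PopescuAux.V d) →L[ℂ] K := uL ∘L outV with huQ
  set uQ' : SeparationQuotient (PopescuAux.V d) →L[ℂ] K' := uL' ∘L outV with huQ'
  have huQ_mk : ∀ f : PopescuAux.V d, uQ (SeparationQuotient.mk f) = u f := by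
    intro f
    have : ‖uL (outV (SeparationQuotient.mk f)) - uL f‖ = 0 := by
      rw [← map_sub]
      calc ‖uL (outV (SeparationQuotient.mk f) - f)‖
          = ‖u (outV (SeparationQuotient.mk f) - f)‖ := rfl
        _ = ‖outV (SeparationQuotient.mk f) - f‖ := (hnormV _).symm
        _ = 0 := hout_mk f
    have := norm_eq_zero.mp this
    have h5 : uL (outV (SeparationQuotient.mk f)) = uL f := sub_eq_zero.mp this
    exact h5
  have huQ'_mk : ∀ f : PopescuAux.V d, uQ' (SeparationQuotient.mk f) = u' f := by
    intro f
    have : ‖uL' (outV (SeparationQuotient.mk f)) - uL' f‖ = 0 := by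
      rw [← map_sub]
      calc ‖uL' (outV (SeparationQuotient.mk f) - f)‖
          = ‖u' (outV (SeparationQuotient.mk f) - f)‖ := rfl
        _ = ‖outV (SeparationQuotient.mk f) - f‖ := (hnormV' _).symm
        _ = 0 := hout_mk f
    have := norm_eq_zero.mp this
    have h5 : uL' (outV (SeparationQuotient.mk f)) = uL' f := sub_eq_zero.mp this
    exact h5
  -- ranges
  have hrange_u : Set.range ⇑u = (Submodule.span ℂ
      {x : K | ∃ I : List (Fin d), x = adjoint (cword v I) Ω} : Submodule ℂ K) := by
    have h1 : {x : K | ∃ I : List (Fin d), x = adjoint (cword v I) Ω} = Set.range ξv := by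
      ext x; exact ⟨fun ⟨I, hI⟩ => ⟨I, hI.symm⟩, fun ⟨I, hI⟩ => ⟨I, hI.symm⟩⟩
    rw [h1, hu, ← Finsupp.range_linearCombination]
    exact (LinearMap.coe_range _).symm
  have hrange_uQ : Set.range ⇑uQ = Set.range ⇑u := by
    apply Set.Subset.antisymm
    · rintro x ⟨q, rfl⟩
      obtain ⟨f, rfl⟩ := SeparationQuotient.surjective_mk q
      exact ⟨f, (huQ_mk f).symm⟩
    · rintro x ⟨f, rfl⟩
      exact ⟨SeparationQuotient.mk f, huQ_mk f⟩
  have hdense_uQ : DenseRange ⇑uQ := by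
    rw [DenseRange, hrange_uQ, hrange_u]
    exact hdense
  have hnorm_uQ : ∀ q, ‖uQ q‖ = ‖q‖ := by
    intro q
    obtain ⟨f, rfl⟩ := SeparationQuotient.surjective_mk q
    rw [huQ_mk, SeparationQuotient.norm_mk, hnormV]
  have hiso_uQ : Isometry ⇑uQ := AddMonoidHomClass.isometry_of_norm _ hnorm_uQ
  -- the intertwining isometry
  set U0 : K →L[ℂ] K' := uQ'.extend uQ with hU0
  have hU0_u : ∀ f : PopescuAux.V d, U0 (u f) = u' f := by
    intro f
    rw [← huQ_mk f, ← huQ'_mk f, hU0]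
    exact ContinuousLinearMap.extend_eq _ hdense_uQ hiso_uQ.isUniformInducing _
  have hU0_norm : ∀ x : K, ‖U0 x‖ = ‖x‖ := by
    intro x
    refine hdense_uQ.induction_on x
      (isClosed_eq (continuous_norm.comp U0.continuous) continuous_norm) fun q => ?_
    obtain ⟨f, rfl⟩ := SeparationQuotient.surjective_mk q
    rw [huQ_mk, hU0_u, ← hnormV', ← hnormV]
  set Ui : K →ₗᵢ[ℂ] K' := ⟨U0.toLinearMap, hU0_norm⟩ with hUi
  have hUi_apply : ∀ x, Ui x = U0 x := fun x => rfl
  have hUδ : ∀ I, Ui (u (Finsupp.single I 1)) = ξv' I := by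
    intro I
    rw [hUi_apply, hU0_u, hu', Finsupp.linearCombination_single, one_smul]
  have huδ : ∀ I, u (Finsupp.single I 1) = ξv I := by
    intro I
    rw [hu, Finsupp.linearCombination_single, one_smul]
  have hsurj : Function.Surjective ⇑Ui := by
    have hclosed : IsClosed (Set.range ⇑Ui) :=
      Ui.isometry.isClosedEmbedding.isClosed_range
    have hsub : (Submodule.span ℂ
        {x : K' | ∃ I : List (Fin d), x = adjoint (cword v' I) Ω'} : Submodule ℂ K')
          ≤ LinearMap.range Ui.toLinearMap := by
      rw [Submodule.span_le]
      rintro x ⟨I, rfl⟩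
      exact ⟨u (Finsupp.single I 1), hUδ I⟩
    intro y
    have hy : y ∈ closure ((Submodule.span ℂ
        {x : K' | ∃ I : List (Fin d), x = adjoint (cword v' I) Ω'} : Submodule ℂ K') : Set K') :=
      hdense' y
    have : y ∈ closure (Set.range ⇑Ui) := by
      refine closure_mono ?_ hy
      intro z hz
      exact hsub hz
    rwa [hclosed.closure_eq] at this
  set U : K ≃ₗᵢ[ℂ] K' := LinearIsometryEquiv.ofSurjective Ui hsurj with hUdef
  have hU_apply : ∀ x, U x = Ui x := fun x => by
    rw [hUdef, LinearIsometryEquiv.coe_ofSurjective]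
  -- U maps Ω to Ω'
  have hUΩ : U Ω = Ω' := by
    have h0 : u (Finsupp.single ([] : List (Fin d)) 1) = Ω := by
      rw [huδ]; exact adjoint_cword_nil v Ω
    have h0' : ξv' ([] : List (Fin d)) = Ω' := adjoint_cword_nil v' Ω'
    rw [hU_apply, ← h0, hUδ, h0']
  -- intertwining with the adjoints
  have hudense : Dense (Set.range ⇑u) := by
    rw [hrange_u]; exact hdense
  have hTu : ∀ (k : Fin d) (f : PopescuAux.V d),
      u (Finsupp.mapDomain (fun I => I ++ [k]) f) = adjoint (v k) (u f) := by
    intro k f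
    rw [hu, Finsupp.linearCombination_mapDomain, Finsupp.linearCombination_apply,
      Finsupp.linearCombination_apply, map_finsuppSum]
    refine Finsupp.sum_congr fun I _ => ?_
    rw [map_smul]
    congr 1
    show ξv (I ++ [k]) = adjoint (v k) (ξv I)
    exact adjoint_cword_append v I k Ω
  have hTu' : ∀ (k : Fin d) (f : PopescuAux.V d),
      u' (Finsupp.mapDomain (fun I => I ++ [k]) f) = adjoint (v' k) (u' f) := by
    intro k f
    rw [hu', Finsupp.linearCombination_mapDomain, Finsupp.linearCombination_apply,
      Finsupp.linearCombination_apply, map_finsuppSum]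
    refine Finsupp.sum_congr fun I _ => ?_
    rw [map_smul]
    congr 1
    show ξv' (I ++ [k]) = adjoint (v' k) (ξv' I)
    exact adjoint_cword_append v' I k Ω'
  have hUw : ∀ (k : Fin d) (x : K), U (adjoint (v k) x) = adjoint (v' k) (U x) := by
    intro k
    have : (fun x : K => U (adjoint (v k) x)) = fun x => adjoint (v' k) (U x) := by
      refine Continuous.ext_on hudense ?_ ?_ ?_
      · exact U.continuous.comp (adjoint (v k)).continuous
      · exact (adjoint (v' k)).continuous.comp U.continuous
      · rintro x ⟨f, rfl⟩
        show U (adjoint (v k) (u f)) = adjoint (v' k) (U (u f))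
        rw [← hTu k f]
        simp only [hU_apply, hUi_apply]
        rw [hU0_u, hU0_u, hTu' k f]
    exact fun x => congrFun this x
  refine ⟨U, hUΩ, fun k ξ => ?_⟩
  -- final intertwining, via inner products
  apply ext_inner_left ℂ
  intro η'
  have e1 : (⟪η', U (v k ξ)⟫ : ℂ) = ⟪U.symm η', v k ξ⟫ := by
    conv_lhs => rw [← U.apply_symm_apply η']
    rw [LinearIsometryEquiv.inner_map_map]
  have e2 : (⟪U.symm η', v k ξ⟫ : ℂ) = ⟪adjoint (v k) (U.symm η'), ξ⟫ := by
    rw [ContinuousLinearMap.adjoint_inner_left]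
  have e3 : adjoint (v k) (U.symm η') = U.symm (adjoint (v' k) η') := by
    apply U.injective
    rw [hUw, U.apply_symm_apply, U.apply_symm_apply]
  have e4 : (⟪U.symm (adjoint (v' k) η'), ξ⟫ : ℂ) = ⟪adjoint (v' k) η', U ξ⟫ := by
    conv_rhs => rw [← U.apply_symm_apply (adjoint (v' k) η')]
    rw [LinearIsometryEquiv.inner_map_map]
  have e5 : (⟪adjoint (v' k) η', U ξ⟫ : ℂ) = ⟪η', v' k (U ξ)⟫ :=
    ContinuousLinearMap.adjoint_inner_left _ _ _
  rw [e1, e2, e3, e4, e5]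

set_option maxHeartbeats 2000000 in
set_option synthInstance.maxHeartbeats 400000 in
/-- A function `C` on pairs of multi-indices which is normalized,
positive definite and satisfies the Cuntz-type consistency relation
`∑ᵢ C(Ii, Ji) = C(I, J)` arises from a unique (up to unitary equivalence) Popescu system
`(K, Ω, v)` with `{v_I* Ω}` total in `K` and `C(I,J) = ⟨v_I* Ω, v_J* Ω⟩`. -/
theorem popescu_system_of_positive_definite_kernel {d : ℕ} (hd : 2 ≤ d)
    (C : List (Fin d) → List (Fin d) → ℂ)
    (h1 : C [] [] = 1)
    (h2 : ∀ lam : List (Fin d) →₀ ℂ,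
      0 ≤ ∑ I ∈ lam.support, ∑ J ∈ lam.support, (starRingEnd ℂ) (lam I) * C I J * lam J)
    (h3 : ∀ I J : List (Fin d), ∑ i : Fin d, C (I ++ [i]) (J ++ [i]) = C I J) :
    ∃ (K : Type) (_ : NormedAddCommGroup K) (_ : InnerProductSpace ℂ K) (_ : CompleteSpace K)
      (Ω : K) (v : Fin d → K →L[ℂ] K),
      ‖Ω‖ = 1 ∧ IsPopescuSystem v ∧
      Dense ((Submodule.span ℂ
          {x : K | ∃ I : List (Fin d), x = adjoint (cword v I) Ω} : Submodule ℂ K) : Set K) ∧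
      (∀ I J : List (Fin d), C I J = ⟪adjoint (cword v I) Ω, adjoint (cword v J) Ω⟫) ∧
      (∀ (K' : Type) (_ : NormedAddCommGroup K') (_ : InnerProductSpace ℂ K')
          (_ : CompleteSpace K') (Ω' : K') (v' : Fin d → K' →L[ℂ] K'),
        ‖Ω'‖ = 1 → IsPopescuSystem v' →
        Dense ((Submodule.span ℂ
            {x : K' | ∃ I : List (Fin d), x = adjoint (cword v' I) Ω'} : Submodule ℂ K') : Set K') →
        (∀ I J : List (Fin d), C I J = ⟪adjoint (cword v' I) Ω', adjoint (cword v' J) Ω'⟫) →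
        ∃ U : K ≃ₗᵢ[ℂ] K', U Ω = Ω' ∧ ∀ (k : Fin d) (ξ : K), U (v k ξ) = v' k (U ξ)) := by
  classical
  have hre : ∀ z : ℂ, RCLike.re z = z.re := fun z => rfl
  -- the pre-inner-product space structure on the free module
  letI pc : PreInnerProductSpace.Core ℂ (PopescuAux.V d) :=
    { inner := PopescuAux.B C
      conj_inner_symm := fun f g => PopescuAux.B_conj_symm h2 f g
      re_inner_nonneg := fun f => by
        show 0 ≤ RCLike.re (PopescuAux.B C f f)
        rw [hre]
        exact PopescuAux.B_self_re_nonneg h2 f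
      add_left := fun f f' g => PopescuAux.B_add_left C f f' g
      smul_left := fun f g c => PopescuAux.B_smul_left C c f g }
  letI : SeminormedAddCommGroup (PopescuAux.V d) :=
    InnerProductSpace.Core.toSeminormedAddCommGroup (𝕜 := ℂ) (F := PopescuAux.V d)
  letI : NormedSpace ℂ (PopescuAux.V d) :=
    InnerProductSpace.Core.toNormedSpace (𝕜 := ℂ) (F := PopescuAux.V d)
  letI : InnerProductSpace ℂ (PopescuAux.V d) :=
    { toInner := pc.toInner
      norm_sq_eq_re_inner := fun x => Real.sq_sqrt (pc.re_inner_nonneg x)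
      conj_inner_symm := pc.conj_inner_symm
      add_left := pc.add_left
      smul_left := pc.smul_left }
  have hinnerV : ∀ f g : PopescuAux.V d, (⟪f, g⟫ : ℂ) = PopescuAux.B C f g := fun f g => rfl
  have hnormV : ∀ f : PopescuAux.V d, ‖f‖ ^ 2 = (PopescuAux.B C f f).re := by
    intro f
    have := norm_sq_eq_re_inner (𝕜 := ℂ) f
    rwa [hinnerV, hre] at this
  -- the quotient and completion maps
  set mkV : PopescuAux.V d →L[ℂ] SeparationQuotient (PopescuAux.V d) :=
    SeparationQuotient.mkCLM ℂ (PopescuAux.V d) with hmkV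
  set outV : SeparationQuotient (PopescuAux.V d) →L[ℂ] PopescuAux.V d :=
    SeparationQuotient.outCLM ℂ (PopescuAux.V d) with houtV
  set eQ : SeparationQuotient (PopescuAux.V d) →L[ℂ]
      UniformSpace.Completion (SeparationQuotient (PopescuAux.V d)) :=
    UniformSpace.Completion.toComplL with heQ
  set e : PopescuAux.V d →L[ℂ]
      UniformSpace.Completion (SeparationQuotient (PopescuAux.V d)) := eQ ∘L mkV with he
  have hefn : ∀ f : PopescuAux.V d, e f =
      ((SeparationQuotient.mk f : SeparationQuotient (PopescuAux.V d)) :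
        UniformSpace.Completion (SeparationQuotient (PopescuAux.V d))) := fun f => rfl
  have he_inner : ∀ f g : PopescuAux.V d, (⟪e f, e g⟫ : ℂ) = PopescuAux.B C f g := by
    intro f g
    rw [hefn, hefn, UniformSpace.Completion.inner_coe, SeparationQuotient.inner_mk_mk, hinnerV]
  have he_norm : ∀ f : PopescuAux.V d, ‖e f‖ = ‖f‖ := by
    intro f
    rw [hefn, UniformSpace.Completion.norm_coe, SeparationQuotient.norm_mk]
  have hnorm_eQ : ∀ q, ‖eQ q‖ = ‖q‖ := by
    intro q
    obtain ⟨f, rfl⟩ := SeparationQuotient.surjective_mk q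
    rw [show eQ (SeparationQuotient.mk f) = e f from rfl, he_norm, SeparationQuotient.norm_mk]
  have hiso_eQ : Isometry ⇑eQ := AddMonoidHomClass.isometry_of_norm _ hnorm_eQ
  have hdense_eQ : DenseRange ⇑eQ := by
    rw [show ⇑eQ = ((↑) : SeparationQuotient (PopescuAux.V d) →
      UniformSpace.Completion (SeparationQuotient (PopescuAux.V d))) from
        UniformSpace.Completion.coe_toComplL]
    exact UniformSpace.Completion.denseRange_coe
  have hdense_e : DenseRange ⇑e := by
    have hcomp : ⇑e = (⇑eQ) ∘ (SeparationQuotient.mk) := rfl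
    rw [hcomp]
    exact DenseRange.comp hdense_eQ SeparationQuotient.surjective_mk.denseRange eQ.continuous
  -- the shift operators on the free module
  have hbound : ∀ (k : Fin d) (f : PopescuAux.V d),
      ‖Finsupp.lmapDomain ℂ ℂ (fun I => I ++ [k]) f‖ ≤ 1 * ‖f‖ := by
    intro k f
    rw [one_mul, Finsupp.lmapDomain_apply]
    have hsq : ‖Finsupp.mapDomain (fun I => I ++ [k]) f‖ ^ 2 ≤ ‖f‖ ^ 2 := by
      rw [hnormV, hnormV]
      have hs := PopescuAux.B_sum_shift C h3 f f
      have : (PopescuAux.B C (Finsupp.mapDomain (fun I => I ++ [k]) f)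
          (Finsupp.mapDomain (fun I => I ++ [k]) f)).re
          ≤ (∑ j : Fin d, PopescuAux.B C (Finsupp.mapDomain (fun I => I ++ [j]) f)
              (Finsupp.mapDomain (fun I => I ++ [j]) f)).re := by
        rw [Complex.re_sum]
        exact Finset.single_le_sum
          (f := fun j : Fin d => (PopescuAux.B C (Finsupp.mapDomain (fun I => I ++ [j]) f)
            (Finsupp.mapDomain (fun I => I ++ [j]) f)).re)
          (fun j _ => PopescuAux.B_self_re_nonneg h2 _) (Finset.mem_univ k)
      rwa [hs] at this
    nlinarith [norm_nonneg (Finsupp.mapDomain (fun I => I ++ [k]) f), norm_nonneg f]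
  set T : Fin d → PopescuAux.V d →L[ℂ] PopescuAux.V d := fun k =>
    LinearMap.mkContinuous (Finsupp.lmapDomain ℂ ℂ (fun I => I ++ [k])) 1 (hbound k) with hT
  have hT_apply : ∀ (k : Fin d) (f : PopescuAux.V d),
      T k f = Finsupp.mapDomain (fun I => I ++ [k]) f := by
    intro k f
    rw [hT]
    exact Finsupp.lmapDomain_apply _ _ _ _
  have hT_norm : ∀ (k : Fin d) (f : PopescuAux.V d), ‖T k f‖ ≤ ‖f‖ := by
    intro k f
    rw [hT_apply, ← Finsupp.lmapDomain_apply ℂ ℂ]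
    simpa using hbound k f
  -- descend the shifts to the separation quotient
  have hout_mk : ∀ f : PopescuAux.V d, ‖outV (SeparationQuotient.mk f) - f‖ = 0 := by
    intro f
    have h2' : SeparationQuotient.mk
        (outV (SeparationQuotient.mk f)) = SeparationQuotient.mk f :=
      SeparationQuotient.mk_outCLM ℂ _
    have h3' : Inseparable (outV (SeparationQuotient.mk f)) f :=
      SeparationQuotient.mk_eq_mk.mp h2'
    have h4 := Metric.inseparable_iff.mp h3'
    rwa [dist_eq_norm] at h4
  set TQ : Fin d → SeparationQuotient (PopescuAux.V d) →L[ℂ]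
      SeparationQuotient (PopescuAux.V d) := fun k => mkV ∘L T k ∘L outV with hTQ
  have hTQ_mk : ∀ (k : Fin d) (f : PopescuAux.V d),
      TQ k (SeparationQuotient.mk f)
        = SeparationQuotient.mk (Finsupp.mapDomain (fun I => I ++ [k]) f) := by
    intro k f
    have hz : ‖T k (outV (SeparationQuotient.mk f)) - T k f‖ = 0 := by
      refine le_antisymm ?_ (norm_nonneg _)
      calc ‖T k (outV (SeparationQuotient.mk f)) - T k f‖
          = ‖T k (outV (SeparationQuotient.mk f) - f)‖ := by rw [map_sub]
        _ ≤ ‖outV (SeparationQuotient.mk f) - f‖ := hT_norm k _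
        _ = 0 := hout_mk f
    have hins : Inseparable (T k (outV (SeparationQuotient.mk f))) (T k f) := by
      rw [Metric.inseparable_iff, dist_eq_norm]
      exact hz
    calc TQ k (SeparationQuotient.mk f)
        = SeparationQuotient.mk (T k (outV (SeparationQuotient.mk f))) := rfl
      _ = SeparationQuotient.mk (T k f) := SeparationQuotient.mk_eq_mk.mpr hins
      _ = SeparationQuotient.mk (Finsupp.mapDomain (fun I => I ++ [k]) f) := by rw [hT_apply]
  -- extend to the completion
  set w : Fin d → UniformSpace.Completion (SeparationQuotient (PopescuAux.V d)) →L[ℂ]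
      UniformSpace.Completion (SeparationQuotient (PopescuAux.V d)) := fun k =>
    (eQ ∘L TQ k).extend eQ with hwdef
  have hw : ∀ (k : Fin d) (f : PopescuAux.V d),
      w k (e f) = e (Finsupp.mapDomain (fun I => I ++ [k]) f) := by
    intro k f
    have h0 : w k (eQ (SeparationQuotient.mk f)) = (eQ ∘L TQ k) (SeparationQuotient.mk f) := by
      rw [hwdef]
      exact ContinuousLinearMap.extend_eq _ hdense_eQ hiso_eQ.isUniformInducing _
    calc w k (e f) = (eQ ∘L TQ k) (SeparationQuotient.mk f) := h0
      _ = eQ (TQ k (SeparationQuotient.mk f)) := rfl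
      _ = eQ (SeparationQuotient.mk (Finsupp.mapDomain (fun I => I ++ [k]) f)) := by
          rw [hTQ_mk]
      _ = e (Finsupp.mapDomain (fun I => I ++ [k]) f) := rfl
  set v : Fin d → UniformSpace.Completion (SeparationQuotient (PopescuAux.V d)) →L[ℂ]
      UniformSpace.Completion (SeparationQuotient (PopescuAux.V d)) := fun k =>
    adjoint (w k) with hvdef
  have hadj : ∀ k : Fin d, adjoint (v k) = w k := by
    intro k
    rw [hvdef]
    exact adjoint_adjoint (w k)
  set Ωv : UniformSpace.Completion (SeparationQuotient (PopescuAux.V d)) :=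
    e (Finsupp.single [] 1) with hΩv
  -- the cyclic vectors
  have hkey : ∀ I : List (Fin d), adjoint (cword v I) Ωv = e (Finsupp.single I 1) := by
    intro I
    induction I using List.reverseRecOn with
    | nil => rw [adjoint_cword_nil]
    | append_singleton I k ih =>
        rw [adjoint_cword_append, ih, hadj, hw, Finsupp.mapDomain_single]
  have hCval : ∀ I J : List (Fin d),
      C I J = ⟪adjoint (cword v I) Ωv, adjoint (cword v J) Ωv⟫ := by
    intro I J
    rw [hkey, hkey, he_inner, PopescuAux.B_single_single]
    simp
  -- norm of the cyclic vector
  have hΩnorm : ‖Ωv‖ = 1 := by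
    have hsq : ‖Ωv‖ ^ 2 = 1 := by
      rw [hΩv, he_norm, hnormV, PopescuAux.B_single_single, h1]
      simp
    calc ‖Ωv‖ = √(‖Ωv‖ ^ 2) := (Real.sqrt_sq (norm_nonneg _)).symm
      _ = √ 1 := by rw [hsq]
      _ = 1 := Real.sqrt_one
  -- the Popescu relation
  have hsum_inner : ∀ f g : PopescuAux.V d,
      ∑ k : Fin d, (⟪w k (e f), w k (e g)⟫ : ℂ) = ⟪e f, e g⟫ := by
    intro f g
    simp only [hw, he_inner]
    exact PopescuAux.B_sum_shift C h3 f g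
  have hPop : IsPopescuSystem v := by
    unfold IsPopescuSystem
    have hPe : ∀ g : PopescuAux.V d,
        (∑ k : Fin d, v k ∘L adjoint (v k)) (e g) = e g := by
      intro g
      apply ext_inner_left ℂ
      intro ξ
      have hfun : (fun ξ : UniformSpace.Completion (SeparationQuotient (PopescuAux.V d)) =>
          (⟪ξ, (∑ k : Fin d, v k ∘L adjoint (v k)) (e g)⟫ : ℂ)) = fun ξ => ⟪ξ, e g⟫ := by
        have hcont : ∀ c : UniformSpace.Completion (SeparationQuotient (PopescuAux.V d)),
            Continuous (fun ξ : UniformSpace.Completion (SeparationQuotient (PopescuAux.V d)) =>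
              (⟪ξ, c⟫ : ℂ)) := fun c =>
          UniformSpace.Completion.Continuous.inner continuous_id continuous_const
        refine Continuous.ext_on hdense_e (hcont _) (hcont _) ?_
        rintro x ⟨f, rfl⟩
        show (⟪e f, (∑ k : Fin d, v k ∘L adjoint (v k)) (e g)⟫ : ℂ) = ⟪e f, e g⟫
        rw [ContinuousLinearMap.sum_apply, inner_sum, ← hsum_inner f g]
        refine Finset.sum_congr rfl fun k _ => ?_
        rw [hadj]
        calc (⟪e f, (v k ∘L w k) (e g)⟫ : ℂ)
            = ⟪e f, v k (w k (e g))⟫ := rfl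
          _ = ⟪adjoint (v k) (e f), w k (e g)⟫ :=
              (ContinuousLinearMap.adjoint_inner_left (v k) _ _).symm
          _ = ⟪w k (e f), w k (e g)⟫ := by rw [hadj]
      exact congrFun hfun ξ
    have heq : (⇑(∑ k : Fin d, v k ∘L adjoint (v k)) :
        UniformSpace.Completion (SeparationQuotient (PopescuAux.V d)) →
          UniformSpace.Completion (SeparationQuotient (PopescuAux.V d)))
        = fun x => x := by
      refine Continuous.ext_on hdense_e (∑ k : Fin d, v k ∘L adjoint (v k)).continuous
        continuous_id ?_
      rintro x ⟨g, rfl⟩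
      exact hPe g
    ext ξ
    rw [ContinuousLinearMap.one_apply]
    exact congrFun heq ξ
  -- density of the span of the cyclic vectors
  have hDense : Dense ((Submodule.span ℂ
      {x : UniformSpace.Completion (SeparationQuotient (PopescuAux.V d)) |
        ∃ I : List (Fin d), x = adjoint (cword v I) Ωv} :
          Submodule ℂ (UniformSpace.Completion (SeparationQuotient (PopescuAux.V d)))) :
        Set (UniformSpace.Completion (SeparationQuotient (PopescuAux.V d)))) := by
    refine Dense.mono ?_ hdense_e
    rintro x ⟨f, rfl⟩
    have hf : e f = ∑ I ∈ f.support, f I • e (Finsupp.single I 1) := by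
      conv_lhs => rw [← Finsupp.sum_single f]
      rw [map_finsuppSum, Finsupp.sum]
      refine Finset.sum_congr rfl fun I _ => ?_
      rw [← map_smul, Finsupp.smul_single, smul_eq_mul, mul_one]
    rw [hf]
    exact Submodule.sum_mem _ fun I _ => Submodule.smul_mem _ _
      (Submodule.subset_span ⟨I, (hkey I).symm⟩)
  exact ⟨UniformSpace.Completion (SeparationQuotient (PopescuAux.V d)),
    inferInstance, inferInstance, inferInstance, Ωv, v, hΩnorm, hPop, hDense, hCval,
    fun K' _ _ _ Ω' v' _ _ hdense' hC' =>
      popescu_unique C Ωv v Ω' v' hDense hCval hdense' hC'⟩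
end
end
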